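/- arXiv:1806.03703 — 12 statements merged into one kernel-verified Lean document; each statement's English description precedes it below -/
import Mathlib

section
/- Define the mirror map μ : I → I by μ(nop) = nop, μ(swap) = swap, μ(inp) = out, μ(out) = inp, μ(set) = res, μ(res) = set, μ(used) = free, μ(free) = used. Then for every type of nets τ ⊆ I and every transition system A: A has the τ-SSP if and only if A has the μ(τ)-SSP, and A has the τ-ESSP if and only if A has the μ(τ)-ESSP. -/
/-! Boolean interactions -/

abbrev Interaction := Bool → Option Bool

def iNop : Interaction := fun b => some b
def iInp : Interaction := fun b => if b then some false else none
def iOut : Interaction := fun b => if b then none else some true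
def iSet : Interaction := fun _ => some true
def iRes : Interaction := fun _ => some false
def iSwap : Interaction := fun b => some (!b)
def iUsed : Interaction := fun b => if b then some true else none
def iFree : Interaction := fun b => if b then none else some false

def allInteractions : Set Interaction :=
  {iNop, iInp, iOut, iSet, iRes, iSwap, iUsed, iFree}

/-! Transition systems and regions -/

structure TS (S E : Type) where
  delta : S → E → Option S
  init : S

def IsRegion {S E : Type} (A : TS S E) (τ : Set Interaction)
    (sup : S → Bool) (sig : E → Interaction) : Prop :=
  (∀ e, sig e ∈ τ) ∧
  ∀ s e s', A.delta s e = some s' → sig e (sup s) = some (sup s')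

def Separable {S E : Type} (A : TS S E) (τ : Set Interaction) (s s' : S) : Prop :=
  ∃ sup sig, IsRegion A τ sup sig ∧ sup s ≠ sup s'

def Inhibitable {S E : Type} (A : TS S E) (τ : Set Interaction) (e : E) (s : S) : Prop :=
  ∃ sup sig, IsRegion A τ sup sig ∧ sig e (sup s) = none

def SSP {S E : Type} (A : TS S E) (τ : Set Interaction) : Prop :=
  ∀ s s' : S, s ≠ s' → Separable A τ s s'

def ESSP {S E : Type} (A : TS S E) (τ : Set Interaction) : Prop :=
  ∀ (s : S) (e : E), A.delta s e = none → Inhibitable A τ e s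

def Feasible {S E : Type} (A : TS S E) (τ : Set Interaction) : Prop :=
  SSP A τ ∧ ESSP A τ

def Reachable {S E : Type} (A : TS S E) : Prop :=
  ∀ s : S, Relation.ReflTransGen (fun x y => ∃ e, A.delta x e = some y) A.init s

/-- The mirror map on interactions, given by the table
nop ↦ nop, swap ↦ swap, inp ↦ out, out ↦ inp, set ↦ res, res ↦ set,
used ↦ free, free ↦ used. -/
noncomputable def mirror (i : Interaction) : Interaction :=
  if i = iNop then iNop
  else if i = iInp then iOut
  else if i = iOut then iInp
  else if i = iSet then iRes
  else if i = iRes then iSet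
  else if i = iSwap then iSwap
  else if i = iUsed then iFree
  else if i = iFree then iUsed
  else i

section MirrorLemmas

lemma mem_all_cases {i : Interaction} (hi : i ∈ allInteractions) :
    i = iNop ∨ i = iInp ∨ i = iOut ∨ i = iSet ∨ i = iRes ∨ i = iSwap ∨ i = iUsed ∨ i = iFree := by
  simpa [allInteractions] using hi

lemma ne_of_app {i j : Interaction} (b : Bool) (h : i b ≠ j b) : i ≠ j :=
  fun hh => h (by rw [hh])

lemma mirror_iNop : mirror iNop = iNop := by simp [mirror]

lemma mirror_iInp : mirror iInp = iOut := by
  have h1 : iInp ≠ iNop := ne_of_app false (by simp [iInp, iNop])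
  simp [mirror, h1]

lemma mirror_iOut : mirror iOut = iInp := by
  have h1 : iOut ≠ iNop := ne_of_app true (by simp [iOut, iNop])
  have h2 : iOut ≠ iInp := ne_of_app false (by simp [iOut, iInp])
  simp [mirror, h1, h2]

lemma mirror_iSet : mirror iSet = iRes := by
  have h1 : iSet ≠ iNop := ne_of_app false (by simp [iSet, iNop])
  have h2 : iSet ≠ iInp := ne_of_app false (by simp [iSet, iInp])
  have h3 : iSet ≠ iOut := ne_of_app true (by simp [iSet, iOut])
  simp [mirror, h1, h2, h3]

lemma mirror_iRes : mirror iRes = iSet := by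
  have h1 : iRes ≠ iNop := ne_of_app true (by simp [iRes, iNop])
  have h2 : iRes ≠ iInp := ne_of_app false (by simp [iRes, iInp])
  have h3 : iRes ≠ iOut := ne_of_app true (by simp [iRes, iOut])
  have h4 : iRes ≠ iSet := ne_of_app true (by simp [iRes, iSet])
  simp [mirror, h1, h2, h3, h4]

lemma mirror_iSwap : mirror iSwap = iSwap := by
  have h1 : iSwap ≠ iNop := ne_of_app true (by simp [iSwap, iNop])
  have h2 : iSwap ≠ iInp := ne_of_app false (by simp [iSwap, iInp])
  have h3 : iSwap ≠ iOut := ne_of_app true (by simp [iSwap, iOut])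
  have h4 : iSwap ≠ iSet := ne_of_app true (by simp [iSwap, iSet])
  have h5 : iSwap ≠ iRes := ne_of_app false (by simp [iSwap, iRes])
  simp [mirror, h1, h2, h3, h4, h5]

lemma mirror_iUsed : mirror iUsed = iFree := by
  have h1 : iUsed ≠ iNop := ne_of_app false (by simp [iUsed, iNop])
  have h2 : iUsed ≠ iInp := ne_of_app true (by simp [iUsed, iInp])
  have h3 : iUsed ≠ iOut := ne_of_app true (by simp [iUsed, iOut])
  have h4 : iUsed ≠ iSet := ne_of_app false (by simp [iUsed, iSet])
  have h5 : iUsed ≠ iRes := ne_of_app true (by simp [iUsed, iRes])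
  have h6 : iUsed ≠ iSwap := ne_of_app true (by simp [iUsed, iSwap])
  simp [mirror, h1, h2, h3, h4, h5, h6]

lemma mirror_iFree : mirror iFree = iUsed := by
  have h1 : iFree ≠ iNop := ne_of_app true (by simp [iFree, iNop])
  have h2 : iFree ≠ iInp := ne_of_app true (by simp [iFree, iInp])
  have h3 : iFree ≠ iOut := ne_of_app false (by simp [iFree, iOut])
  have h4 : iFree ≠ iSet := ne_of_app true (by simp [iFree, iSet])
  have h5 : iFree ≠ iRes := ne_of_app true (by simp [iFree, iRes])
  have h6 : iFree ≠ iSwap := ne_of_app false (by simp [iFree, iSwap])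
  have h7 : iFree ≠ iUsed := ne_of_app true (by simp [iFree, iUsed])
  simp [mirror, h1, h2, h3, h4, h5, h6, h7]

lemma mirror_neg {i : Interaction} (hi : i ∈ allInteractions) (b : Bool) :
    mirror i (!b) = Option.map not (i b) := by
  rcases mem_all_cases hi with h|h|h|h|h|h|h|h <;> subst h <;>
    first
    | (rw [mirror_iNop]; cases b <;> simp [iNop])
    | (rw [mirror_iInp]; cases b <;> simp [iInp, iOut])
    | (rw [mirror_iOut]; cases b <;> simp [iInp, iOut])
    | (rw [mirror_iSet]; cases b <;> simp [iSet, iRes])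
    | (rw [mirror_iRes]; cases b <;> simp [iSet, iRes])
    | (rw [mirror_iSwap]; cases b <;> simp [iSwap])
    | (rw [mirror_iUsed]; cases b <;> simp [iUsed, iFree])
    | (rw [mirror_iFree]; cases b <;> simp [iUsed, iFree])

lemma mirror_mem {i : Interaction} (hi : i ∈ allInteractions) :
    mirror i ∈ allInteractions := by
  rcases mem_all_cases hi with h|h|h|h|h|h|h|h <;> subst h <;>
    simp [mirror_iNop, mirror_iInp, mirror_iOut, mirror_iSet, mirror_iRes,
      mirror_iSwap, mirror_iUsed, mirror_iFree, allInteractions]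

lemma mirror_mirror {i : Interaction} (hi : i ∈ allInteractions) :
    mirror (mirror i) = i := by
  rcases mem_all_cases hi with h|h|h|h|h|h|h|h <;> subst h <;>
    simp [mirror_iNop, mirror_iInp, mirror_iOut, mirror_iSet, mirror_iRes,
      mirror_iSwap, mirror_iUsed, mirror_iFree]

lemma mirror_image_image {τ : Set Interaction} (hτ : τ ⊆ allInteractions) :
    mirror '' (mirror '' τ) = τ := by
  rw [Set.image_image]
  apply Set.ext
  intro x
  constructor
  · rintro ⟨y, hy, rfl⟩
    show mirror (mirror y) ∈ τ
    rwa [mirror_mirror (hτ hy)]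
  · intro hx
    exact ⟨x, hx, mirror_mirror (hτ hx)⟩

lemma region_mirror {S E : Type} (A : TS S E) {τ : Set Interaction}
    (hτ : τ ⊆ allInteractions) {sup : S → Bool} {sig : E → Interaction}
    (h : IsRegion A τ sup sig) :
    IsRegion A (mirror '' τ) (fun s => !sup s) (fun e => mirror (sig e)) := by
  constructor
  · intro e; exact ⟨sig e, h.1 e, rfl⟩
  · intro s e s' hd
    show mirror (sig e) (!sup s) = some (!sup s')
    rw [mirror_neg (hτ (h.1 e)), h.2 s e s' hd]
    rfl

lemma SSP_mirror {S E : Type} (A : TS S E) {τ : Set Interaction}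
    (hτ : τ ⊆ allInteractions) (h : SSP A τ) : SSP A (mirror '' τ) := by
  intro s s' hne
  obtain ⟨sup, sig, hreg, hsep⟩ := h s s' hne
  exact ⟨fun t => !sup t, fun e => mirror (sig e), region_mirror A hτ hreg, by
    simp [hsep]⟩

lemma ESSP_mirror {S E : Type} (A : TS S E) {τ : Set Interaction}
    (hτ : τ ⊆ allInteractions) (h : ESSP A τ) : ESSP A (mirror '' τ) := by
  intro s e hd
  obtain ⟨sup, sig, hreg, hinh⟩ := h s e hd
  refine ⟨fun t => !sup t, fun e => mirror (sig e), region_mirror A hτ hreg, ?_⟩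
  show mirror (sig e) (!sup s) = none
  rw [mirror_neg (hτ (hreg.1 e)), hinh]
  rfl

end MirrorLemmas

/-- the mirror map preserves SSP and ESSP. -/
theorem mirror_SSP_ESSP {S E : Type} [Fintype S] [Fintype E]
    (A : TS S E) (hreach : Reachable A)
    (τ : Set Interaction) (hτ : τ ⊆ allInteractions) :
    (SSP A τ ↔ SSP A (mirror '' τ)) ∧ (ESSP A τ ↔ ESSP A (mirror '' τ)) := by
  have hτ' : mirror '' τ ⊆ allInteractions := by
    rintro _ ⟨x, hx, rfl⟩; exact mirror_mem (hτ hx)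
  constructor
  · constructor
    · exact SSP_mirror A hτ
    · intro h
      have := SSP_mirror A hτ' h
      rwa [mirror_image_image hτ] at this
  · constructor
    · exact ESSP_mirror A hτ
    · intro h
      have := ESSP_mirror A hτ' h
      rwa [mirror_image_image hτ] at this
end

section
/- Let G be the TS with states {g_0, g_1, g_2, g_3}, initial state g_0, events {a, k, b}, and transitions g_0 --a--> g_1, g_0 --k--> g_2, g_1 --k--> g_3, and g_2 --b--> g_3. For every type of nets τ ⊆ I and every τ-region (sup, sig) of G: (1) if sig(k) = inp then sig(a) ∈ keep+ and sig(b) ∈ keep−; (2) if sig(k) = out then sig(a) ∈ keep− and sig(b) ∈ keep+; (3) if sig(k) = used then sig(a) ∈ keep+ and sig(b) ∈ keep+; (4) if sig(k) = free then sig(a) ∈ keep− and sig(b) ∈ keep−. -/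
/-! The generator TS G on states g0, g1, g2, g3 with events a, k, b and
transitions g0 --a--> g1, g0 --k--> g2, g1 --k--> g3, g2 --b--> g3. -/

inductive GState where
  | g0 | g1 | g2 | g3

inductive GEvent where
  | a | k | b

def G : TS GState GEvent where
  delta := fun s e =>
    match s, e with
    | .g0, .a => some .g1
    | .g0, .k => some .g2
    | .g1, .k => some .g3
    | .g2, .b => some .g3
    | _, _ => none
  init := .g0

def keepPlus : Set Interaction := {iNop, iSet, iUsed}
def keepMinus : Set Interaction := {iNop, iRes, iFree}

lemma mem_keepPlus_of (f : Interaction) (h : f ∈ allInteractions)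
    (ht : f true = some true) : f ∈ keepPlus := by
  rcases h with h|h|h|h|h|h|h|h <;> subst h <;>
    simp_all [keepPlus, iNop, iInp, iOut, iSet, iRes, iSwap, iUsed, iFree]

lemma mem_keepMinus_of (f : Interaction) (h : f ∈ allInteractions)
    (ht : f false = some false) : f ∈ keepMinus := by
  rcases h with h|h|h|h|h|h|h|h <;> subst h <;>
    simp_all [keepMinus, iNop, iInp, iOut, iSet, iRes, iSwap, iUsed, iFree]

/-- the generator lemma. -/
theorem generator_lemma (τ : Set Interaction) (hτ : τ ⊆ allInteractions)
    (sup : GState → Bool) (sig : GEvent → Interaction)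
    (hreg : IsRegion G τ sup sig) :
    (sig .k = iInp → sig .a ∈ keepPlus ∧ sig .b ∈ keepMinus) ∧
    (sig .k = iOut → sig .a ∈ keepMinus ∧ sig .b ∈ keepPlus) ∧
    (sig .k = iUsed → sig .a ∈ keepPlus ∧ sig .b ∈ keepPlus) ∧
    (sig .k = iFree → sig .a ∈ keepMinus ∧ sig .b ∈ keepMinus) := by
  obtain ⟨hmem, hδ⟩ := hreg
  have h1 : sig .a (sup .g0) = some (sup .g1) := hδ .g0 .a .g1 rfl
  have h2 : sig .k (sup .g0) = some (sup .g2) := hδ .g0 .k .g2 rfl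
  have h3 : sig .k (sup .g1) = some (sup .g3) := hδ .g1 .k .g3 rfl
  have h4 : sig .b (sup .g2) = some (sup .g3) := hδ .g2 .b .g3 rfl
  have ha : sig .a ∈ allInteractions := hτ (hmem .a)
  have hb : sig .b ∈ allInteractions := hτ (hmem .b)
  refine ⟨?_, ?_, ?_, ?_⟩ <;> intro hk <;> rw [hk] at h2 h3
  · have e0 : sup .g0 = true := by cases h : sup .g0 <;> simp_all [iInp]
    have e1 : sup .g1 = true := by cases h : sup .g1 <;> simp_all [iInp]
    rw [e0] at h2 h1; rw [e1] at h3
    simp [iInp] at h2 h3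
    rw [e1] at h1; rw [h2, h3] at h4
    exact ⟨mem_keepPlus_of _ ha h1, mem_keepMinus_of _ hb h4⟩
  · have e0 : sup .g0 = false := by cases h : sup .g0 <;> simp_all [iOut]
    have e1 : sup .g1 = false := by cases h : sup .g1 <;> simp_all [iOut]
    rw [e0] at h2 h1; rw [e1] at h3
    simp [iOut] at h2 h3
    rw [e1] at h1; rw [h2, h3] at h4
    exact ⟨mem_keepMinus_of _ ha h1, mem_keepPlus_of _ hb h4⟩
  · have e0 : sup .g0 = true := by cases h : sup .g0 <;> simp_all [iUsed]
    have e1 : sup .g1 = true := by cases h : sup .g1 <;> simp_all [iUsed]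
    rw [e0] at h2 h1; rw [e1] at h3
    simp [iUsed] at h2 h3
    rw [e1] at h1; rw [h2, h3] at h4
    exact ⟨mem_keepPlus_of _ ha h1, mem_keepPlus_of _ hb h4⟩
  · have e0 : sup .g0 = false := by cases h : sup .g0 <;> simp_all [iFree]
    have e1 : sup .g1 = false := by cases h : sup .g1 <;> simp_all [iFree]
    rw [e0] at h2 h1; rw [e1] at h3
    simp [iFree] at h2 h3
    rw [e1] at h1; rw [h2, h3] at h4
    exact ⟨mem_keepMinus_of _ ha h1, mem_keepMinus_of _ hb h4⟩
end

section
/- Let τ = {nop, set, res} ∪ ω be a type of nets with ω ⊆ {used, free}. A modest TS A, i.e., a TS that is simple (there are no two transitions s --e--> s' and s --e'--> s' with e ≠ e'), loop-free (there is no transition s --e--> s), and reduced (every event labels at least one transition), is τ-feasible if and only if A has exactly one state. -/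
/-- for τ = {nop, set, res} ∪ ω with ω ⊆ {used, free},
a modest TS (simple, loop-free, reduced) is τ-feasible iff it has exactly one state. -/
theorem modest_feasible_iff_one_state_nop_set_res {S E : Type} [Fintype S] [Fintype E]
    (A : TS S E) (hreach : Reachable A)
    (hsimple : ∀ s s' e e', A.delta s e = some s' → A.delta s e' = some s' → e = e')
    (hloopfree : ∀ s e, A.delta s e ≠ some s)
    (hreduced : ∀ e : E, ∃ s s', A.delta s e = some s')
    (ω : Set Interaction) (hω : ω ⊆ {iUsed, iFree}) :
    Feasible A ({iNop, iSet, iRes} ∪ ω) ↔ Fintype.card S = 1 := by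
  constructor
  · rintro ⟨hssp, hessp⟩
    -- no transitions exist at all
    have hnot : ∀ x (e : E) y, A.delta x e ≠ some y := by
      intro x e y hxy
      -- e is defined at every target of an e-transition
      have hdef : ∀ z w, A.delta z e = some w → ∃ v, A.delta w e = some v := by
        intro z w hzw
        by_contra hc
        push_neg at hc
        have hnone : A.delta w e = none := by
          cases h : A.delta w e with
          | none => rfl
          | some v => exact absurd h (hc v)
        obtain ⟨sup, sig, hreg, hund⟩ := hessp w e hnone
        have htr := hreg.2 z e w hzw
        have hmem := hreg.1 e
        simp only [Set.mem_union, Set.mem_insert_iff, Set.mem_singleton_iff] at hmem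
        rcases hmem with (h | h | h) | h
        · rw [h] at hund; simp [iNop] at hund
        · rw [h] at hund; simp [iSet] at hund
        · rw [h] at hund; simp [iRes] at hund
        · have h2 := hω h
          simp only [Set.mem_insert_iff, Set.mem_singleton_iff] at h2
          rcases h2 with h2 | h2 <;> rw [h2] at hund htr <;>
            cases hz : sup z <;> cases hw : sup w <;>
            simp [iUsed, iFree, hz, hw] at hund htr
      -- the e-successor function
      classical
      set f : S → S := fun w => if h : ∃ v, A.delta w e = some v then h.choose else w with hf
      have hstep : ∀ w, (∃ v, A.delta w e = some v) → A.delta w e = some (f w) := by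
        intro w hw
        simp only [hf, dif_pos hw]
        exact hw.choose_spec
      set u : ℕ → S := fun n => f^[n] y with hu
      have hex : ∀ n, ∃ v, A.delta (u n) e = some v := by
        intro n
        induction n with
        | zero => exact hdef x y hxy
        | succ n ih =>
          have h1 : u (n+1) = f (u n) := by
            simp only [hu, Function.iterate_succ_apply']
          rw [h1]
          exact hdef (u n) (f (u n)) (hstep (u n) ih)
      have htrans : ∀ n, A.delta (u n) e = some (u (n+1)) := by
        intro n
        have h1 : u (n+1) = f (u n) := by
          simp only [hu, Function.iterate_succ_apply']
        rw [h1]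
        exact hstep (u n) (hex n)
      -- pigeonhole: u repeats
      obtain ⟨a, b, hab, heq⟩ := Finite.exists_ne_map_eq_of_infinite u
      wlog hlt : a < b generalizing a b
      · exact this b a hab.symm heq.symm (by omega)
      -- separate u a and u (a+1)
      have hne : u a ≠ u (a+1) := fun h => hloopfree (u a) e (h ▸ htrans a)
      obtain ⟨sup, sig, hreg, hsep⟩ := hssp (u a) (u (a+1)) hne
      have htr : ∀ n, sig e (sup (u n)) = some (sup (u (n+1))) :=
        fun n => hreg.2 (u n) e (u (n+1)) (htrans n)
      have hmem := hreg.1 e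
      have hb : b = (b-1) + 1 := by omega
      simp only [Set.mem_union, Set.mem_insert_iff, Set.mem_singleton_iff] at hmem
      rcases hmem with (h | h | h) | h
      · -- nop
        have := htr a
        rw [h] at this
        simp [iNop] at this
        exact hsep this
      · -- set : all successors have sup true
        have hall : ∀ n, sup (u (n+1)) = true := by
          intro n
          have := htr n
          rw [h] at this
          simpa [iSet] using this.symm
        have h1 : sup (u a) = true := by
          rw [heq, hb]; exact hall (b-1)
        exact hsep (h1.trans (hall a).symm)
      · -- res
        have hall : ∀ n, sup (u (n+1)) = false := by
          intro n
          have := htr n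
          rw [h] at this
          simpa [iRes] using this.symm
        have h1 : sup (u a) = false := by
          rw [heq, hb]; exact hall (b-1)
        exact hsep (h1.trans (hall a).symm)
      · -- used/free
        have h2 := hω h
        simp only [Set.mem_insert_iff, Set.mem_singleton_iff] at h2
        have ht := htr a
        rcases h2 with h2 | h2 <;> rw [h2] at ht <;>
          cases h1 : sup (u a) <;> cases hh2 : sup (u (a+1)) <;>
          simp [iUsed, iFree, h1, hh2] at ht hsep
    -- no transitions + reachable ⇒ all states are init
    have hall : ∀ s : S, s = A.init := by
      intro s
      induction hreach s with
      | refl => rfl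
      | tail _ hstep ih =>
        obtain ⟨e, he⟩ := hstep
        exact absurd he (hnot _ e _)
    exact Fintype.card_eq_one_iff.mpr ⟨A.init, hall⟩
  · intro h1
    have hall : ∀ s s' : S, s = s' := Fintype.card_le_one_iff.mp (le_of_eq h1)
    constructor
    · intro s s' hne
      exact absurd (hall s s') hne
    · intro s e _
      obtain ⟨x, y, hxy⟩ := hreduced e
      rw [hall y x] at hxy
      exact absurd hxy (hloopfree x e)
end

section
/- Let τ = {nop} ∪ ω be a type of nets with ω ⊆ {used, free}. A reduced TS A (every event labels at least one transition) is τ-feasible if and only if A has exactly one state. -/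
lemma pres_aux (f : Interaction) (hf : f = iNop ∨ f = iUsed ∨ f = iFree)
    (x y : Bool) (h : f x = some y) : y = x := by
  rcases hf with rfl | rfl | rfl <;> cases x <;> simp_all [iNop, iUsed, iFree]

/-- for τ = {nop} ∪ ω with ω ⊆ {used, free},
a reduced TS is τ-feasible iff it has exactly one state. -/
theorem reduced_feasible_iff_one_state_nop {S E : Type} [Fintype S] [Fintype E]
    (A : TS S E) (hreach : Reachable A)
    (hreduced : ∀ e : E, ∃ s s', A.delta s e = some s')
    (ω : Set Interaction) (hω : ω ⊆ {iUsed, iFree}) :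
    Feasible A ({iNop} ∪ ω) ↔ Fintype.card S = 1 := by
  constructor
  · rintro ⟨hssp, _⟩
    by_contra hcard
    have h0 : 0 < Fintype.card S := Fintype.card_pos_iff.mpr ⟨A.init⟩
    have h1 : 1 < Fintype.card S := by omega
    obtain ⟨s, s', hne⟩ := Fintype.exists_pair_of_one_lt_card h1
    obtain ⟨sup, sig, ⟨hsig, hreg⟩, hsep⟩ := hssp s s' hne
    have hconst : ∀ t : S, sup t = sup A.init := by
      intro t
      induction hreach t with
      | refl => rfl
      | tail _ h ih =>
        obtain ⟨e, he⟩ := h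
        have hstep := hreg _ e _ he
        have hmem := hsig e
        rw [Set.mem_union, Set.mem_singleton_iff] at hmem
        have hcase : sig e = iNop ∨ sig e = iUsed ∨ sig e = iFree := by
          rcases hmem with h | h
          · exact Or.inl h
          · have := hω h
            rw [Set.mem_insert_iff, Set.mem_singleton_iff] at this
            exact Or.inr this
        rw [pres_aux (sig e) hcase _ _ hstep, ih]
    exact hsep ((hconst s).trans (hconst s').symm)
  · intro hcard
    have hsub : Subsingleton S := Fintype.card_le_one_iff_subsingleton.mp (le_of_eq hcard)
    constructor
    · intro s s' hne
      exact absurd (Subsingleton.elim s s') hne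
    · intro s e hnone
      obtain ⟨s1, s2, h⟩ := hreduced e
      rw [Subsingleton.elim s1 s] at h
      rw [h] at hnone
      exact absurd hnone (by simp)
end

section
/- Let τ = {nop, res} ∪ ω be a type of nets with ω ⊆ {inp, used, free}, let A be a TS, and let Q ⊆ S. Let sup be the indicator function of the closure cl(Q), and define sig : E → τ by the first applicable case: sig(e) = used if used ∈ τ and every state incident to an e-labeled transition lies in cl(Q); sig(e) = free if free ∈ τ and no state incident to an e-labeled transition lies in cl(Q); sig(e) = inp if inp ∈ τ and every transition s --e--> s' has sup(s) = 1 and sup(s') = 0; sig(e) = res if inp ∉ τ and every transition s --e--> s' has sup(s) = 1 and sup(s') = 0; sig(e) = res if at least one but not every transition s --e--> s' has sup(s) = 1 and sup(s') = 0; and sig(e) = nop otherwise. Then (sup, sig) is a τ-region of A. Moreover, for every τ-region (sup', sig') of A with Q ⊆ (sup')⁻¹(1) it holds that cl(Q) ⊆ (sup')⁻¹(1). -/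
/-! The closure cl(Q): the least subset R of S containing Q such that for all
s ∈ R, s' ∈ S, e ∈ E: if s' --e--> s then s' ∈ R, and if s --e--> s' and there
exist z, z' ∈ R with z --e--> z' then s' ∈ R. -/

inductive InCl {S E : Type} (A : TS S E) (Q : Set S) : S → Prop
  | base {s : S} : s ∈ Q → InCl A Q s
  | back {s s' : S} {e : E} : InCl A Q s → A.delta s' e = some s → InCl A Q s'
  | fwd {s s' z z' : S} {e : E} : InCl A Q s → A.delta s e = some s' →
      InCl A Q z → InCl A Q z' → A.delta z e = some z' → InCl A Q s'

open Classical in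
/-- The indicator function of the closure cl(Q). -/
noncomputable def canonSup {S E : Type} (A : TS S E) (Q : Set S) : S → Bool :=
  fun s => if InCl A Q s then true else false

open Classical in
/-- The canonical signature associated with the closure cl(Q), defined by the
first applicable case: used / free / inp / res (inp ∉ τ) / res (partial) / nop. -/
noncomputable def canonSig {S E : Type} (A : TS S E) (τ : Set Interaction)
    (Q : Set S) : E → Interaction :=
  fun e =>
    if iUsed ∈ τ ∧ ∀ s s', A.delta s e = some s' →
        canonSup A Q s = true ∧ canonSup A Q s' = true then iUsed
    else if iFree ∈ τ ∧ ∀ s s', A.delta s e = some s' →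
        canonSup A Q s = false ∧ canonSup A Q s' = false then iFree
    else if iInp ∈ τ ∧ ∀ s s', A.delta s e = some s' →
        canonSup A Q s = true ∧ canonSup A Q s' = false then iInp
    else if iInp ∉ τ ∧ ∀ s s', A.delta s e = some s' →
        canonSup A Q s = true ∧ canonSup A Q s' = false then iRes
    else if (∃ s s', A.delta s e = some s' ∧
              canonSup A Q s = true ∧ canonSup A Q s' = false) ∧
            ¬ (∀ s s', A.delta s e = some s' →
              canonSup A Q s = true ∧ canonSup A Q s' = false) then iRes
    else iNop


lemma canonSup_true_iff {S E : Type} (A : TS S E) (Q : Set S) (s : S) :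
    canonSup A Q s = true ↔ InCl A Q s := by
  simp [canonSup]

lemma canonSup_false_iff {S E : Type} (A : TS S E) (Q : Set S) (s : S) :
    canonSup A Q s = false ↔ ¬ InCl A Q s := by
  simp [canonSup]

/-- the canonical pair on the closure of Q is a τ-region, and the
closure is contained in the support of every τ-region whose support contains Q. -/
theorem canonical_region_and_minimality {S E : Type} [Fintype S] [Fintype E]
    (A : TS S E) (hreach : Reachable A)
    (ω : Set Interaction) (hω : ω ⊆ {iInp, iUsed, iFree})
    (Q : Set S) :
    IsRegion A ({iNop, iRes} ∪ ω) (canonSup A Q) (canonSig A ({iNop, iRes} ∪ ω) Q) ∧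
    ∀ (sup' : S → Bool) (sig' : E → Interaction),
      IsRegion A ({iNop, iRes} ∪ ω) sup' sig' →
      (∀ s ∈ Q, sup' s = true) →
      ∀ s : S, InCl A Q s → sup' s = true := by
  have hNop : iNop ∈ ({iNop, iRes} ∪ ω : Set Interaction) := Or.inl (Or.inl rfl)
  have hRes : iRes ∈ ({iNop, iRes} ∪ ω : Set Interaction) := Or.inl (Or.inr rfl)
  constructor
  · constructor
    · intro e
      unfold canonSig
      split_ifs with h1 h2 h3 h4 h5
      · exact h1.1
      · exact h2.1
      · exact h3.1
      · exact hRes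
      · exact hRes
      · exact hNop
    · intro s e s' hδ
      unfold canonSig
      split_ifs with h1 h2 h3 h4 h5
      · obtain ⟨hs, hs'⟩ := h1.2 s s' hδ
        simp [iUsed, hs, hs']
      · obtain ⟨hs, hs'⟩ := h2.2 s s' hδ
        simp [iFree, hs, hs']
      · obtain ⟨hs, hs'⟩ := h3.2 s s' hδ
        simp [iInp, hs, hs']
      · obtain ⟨hs, hs'⟩ := h4.2 s s' hδ
        simp [iRes, hs, hs']
      · -- partial res case: show target not in closure
        have hs' : canonSup A Q s' = false := by
          rw [canonSup_false_iff]
          intro hin'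
          have hin : InCl A Q s := InCl.back hin' hδ
          obtain ⟨⟨t, t', hδt, ht, ht'⟩, _⟩ := h5
          have : InCl A Q t' :=
            InCl.fwd ((canonSup_true_iff A Q t).1 ht) hδt hin hin' hδ
          rw [canonSup_false_iff] at ht'
          exact ht' this
        simp [iRes, hs']
      · -- nop case: sup preserved
        have hP : ¬ ∀ s s', A.delta s e = some s' →
            canonSup A Q s = true ∧ canonSup A Q s' = false := by
          intro hP
          by_cases hi : iInp ∈ ({iNop, iRes} ∪ ω : Set Interaction)
          · exact h3 ⟨hi, hP⟩
          · exact h4 ⟨hi, hP⟩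
        have hnE : ¬ ∃ s s', A.delta s e = some s' ∧
            canonSup A Q s = true ∧ canonSup A Q s' = false := by
          intro hE
          exact h5 ⟨hE, hP⟩
        have : canonSup A Q s = canonSup A Q s' := by
          cases hsv : canonSup A Q s' with
          | true =>
            have hin : InCl A Q s :=
              InCl.back ((canonSup_true_iff A Q s').1 hsv) hδ
            rw [(canonSup_true_iff A Q s).2 hin]
          | false =>
            cases hsu : canonSup A Q s with
            | true => exact absurd ⟨s, s', hδ, hsu, hsv⟩ hnE
            | false => rfl
        simp [iNop, this]
  · intro sup' sig' hreg hQ s hs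
    induction hs with
    | base h => exact hQ _ h
    | back hin hδ ih =>
      rename_i s s' e
      have hmem := hreg.1 e
      have htr := hreg.2 s' e s hδ
      rw [ih] at htr
      simp only [Set.mem_union, Set.mem_insert_iff, Set.mem_singleton_iff] at hmem
      rcases hmem with (h | h) | h
      · rw [h] at htr; simpa [iNop] using htr
      · rw [h] at htr; simp [iRes] at htr
      · have h' := hω h
        simp only [Set.mem_insert_iff, Set.mem_singleton_iff] at h'
        rcases h' with h' | h' | h' <;> rw [h'] at htr
        · cases hb : sup' s' <;> simp [iInp, hb] at htr
        · cases hb : sup' s' <;> simp [iUsed, hb] at htr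
          rfl
        · cases hb : sup' s' <;> simp [iFree, hb] at htr
    | fwd hin hδ hz hz' hδz ih ihz ihz' =>
      rename_i s s' z z' e
      have h1 := hreg.2 z e z' hδz
      have h2 := hreg.2 s e s' hδ
      rw [ihz, ihz'] at h1
      rw [ih] at h2
      rw [h1] at h2
      exact (Option.some_injective _ h2).symm
end

section
/- Let τ = {nop, res} ∪ ω be a type of nets with ω ⊆ {inp, used, free}, let A be a TS, and let e ∈ E and s ∈ S with ¬(s --e-->). Then e is τ-inhibitable at s if and only if at least one of the following holds: (1) inp ∈ τ and the canonical τ-region of the closure cl({z ∈ S : z --e-->}) satisfies sig(e) = inp and s ∉ cl({z : z --e-->}); (2) used ∈ τ and the canonical τ-region of the closure cl({z, z' ∈ S : z --e--> z'}) satisfies sig(e) = used and s ∉ cl({z, z' : z --e--> z'}); (3) free ∈ τ and the canonical τ-region of the closure cl({s}) satisfies sig(e) = free. -/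
section Aux
variable {S E : Type}

lemma canonSup_eq_true (A : TS S E) (Q : Set S) (z : S) :
    canonSup A Q z = true ↔ InCl A Q z := by
  unfold canonSup; split <;> simp_all

lemma canonSup_eq_false (A : TS S E) (Q : Set S) (z : S) :
    canonSup A Q z = false ↔ ¬ InCl A Q z := by
  rw [← canonSup_eq_true A Q z]; cases canonSup A Q z <;> simp

lemma tau_cases {ω : Set Interaction} (hω : ω ⊆ {iInp, iUsed, iFree})
    {f : Interaction} (hf : f ∈ ({iNop, iRes} ∪ ω : Set Interaction)) :
    f = iNop ∨ f = iRes ∨ f = iInp ∨ f = iUsed ∨ f = iFree := by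
  rcases hf with hf | hf
  · simp only [Set.mem_insert_iff, Set.mem_singleton_iff] at hf; tauto
  · have h2 := hω hf
    simp only [Set.mem_insert_iff, Set.mem_singleton_iff] at h2; tauto

lemma sup_no_rise (A : TS S E) {ω : Set Interaction} (hω : ω ⊆ {iInp, iUsed, iFree})
    {sup : S → Bool} {sig : E → Interaction}
    (hreg : IsRegion A ({iNop, iRes} ∪ ω) sup sig)
    {z z' : S} {f : E} (h : A.delta z f = some z') (hz : sup z = false) :
    sup z' = false := by
  have ht := hreg.2 z f z' h
  rcases tau_cases hω (hreg.1 f) with h1 | h1 | h1 | h1 | h1 <;>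
    rw [h1, hz] at ht <;>
    simp [iNop, iRes, iInp, iUsed, iFree] at ht <;>
    simp [← ht]

lemma cl_sup_true (A : TS S E) {ω : Set Interaction} (hω : ω ⊆ {iInp, iUsed, iFree})
    {sup : S → Bool} {sig : E → Interaction}
    (hreg : IsRegion A ({iNop, iRes} ∪ ω) sup sig) {Q : Set S}
    (hQ : ∀ q ∈ Q, sup q = true) : ∀ z, InCl A Q z → sup z = true := by
  intro z hz
  induction hz with
  | base h => exact hQ _ h
  | back h hd ih =>
    by_contra hc
    have hf : sup _ = false := Bool.not_eq_true _ ▸ hc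
    have := sup_no_rise A hω hreg hd hf
    simp_all
  | fwd h1 hd1 h2 h3 hd2 ih1 ih2 ih3 =>
    have hw := hreg.2 _ _ _ hd2
    rw [ih2, ih3] at hw
    have hs := hreg.2 _ _ _ hd1
    rw [ih1, hw] at hs
    exact (Option.some_injective _ hs).symm

lemma not_inCl_of_empty (A : TS S E) {Q : Set S} (hQ : ∀ q, q ∉ Q) (z : S) :
    ¬ InCl A Q z := by
  intro h
  induction h with
  | base h => exact hQ _ h
  | back _ _ ih => exact ih
  | fwd _ _ _ _ _ ih1 _ _ => exact ih1



section Canon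
variable {S E : Type}

lemma canon_region (A : TS S E) (ω : Set Interaction) (Q : Set S) :
    IsRegion A ({iNop, iRes} ∪ ω) (canonSup A Q) (canonSig A ({iNop, iRes} ∪ ω) Q) := by
  constructor
  · intro f
    unfold canonSig
    split_ifs with h1 h2 h3 h4 h5
    · exact h1.1
    · exact h2.1
    · exact h3.1
    · exact Or.inl (by simp)
    · exact Or.inl (by simp)
    · exact Or.inl (by simp)
  · intro z f z' hd
    unfold canonSig
    split_ifs with h1 h2 h3 h4 h5
    · obtain ⟨ha, hb⟩ := h1.2 z z' hd
      rw [ha, hb]; rfl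
    · obtain ⟨ha, hb⟩ := h2.2 z z' hd
      rw [ha, hb]; rfl
    · obtain ⟨ha, hb⟩ := h3.2 z z' hd
      rw [ha, hb]; rfl
    · obtain ⟨ha, hb⟩ := h4.2 z z' hd
      rw [ha, hb]; rfl
    · -- partial res case
      obtain ⟨⟨w, w', hdw, hw, hw'⟩, _⟩ := h5
      have hz' : canonSup A Q z' = false := by
        rw [canonSup_eq_false]
        intro hcl
        have hzin : InCl A Q z := InCl.back hcl hd
        have : InCl A Q w' :=
          InCl.fwd ((canonSup_eq_true A Q w).mp hw) hdw hzin hcl hd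
        rw [(canonSup_eq_true A Q w').mpr this] at hw'
        exact absurd hw' (by simp)
      rw [hz']; rfl
    · -- nop case: show canonSup z' = canonSup z
      have : canonSup A Q z' = canonSup A Q z := by
        cases hz : canonSup A Q z with
        | false =>
          rw [canonSup_eq_false]
          intro hcl
          have : InCl A Q z := InCl.back hcl hd
          rw [(canonSup_eq_true A Q z).mpr this] at hz
          exact absurd hz (by simp)
        | true =>
          by_contra hne
          have hz' : canonSup A Q z' = false := by
            cases h : canonSup A Q z' <;> simp_all
          have hex : ∃ a a', A.delta a f = some a' ∧
              canonSup A Q a = true ∧ canonSup A Q a' = false := ⟨z, z', hd, hz, hz'⟩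
          push_neg at h5
          have hall := h5 hex
          by_cases hinp : iInp ∈ ({iNop, iRes} ∪ ω : Set Interaction)
          · exact h3 ⟨hinp, hall⟩
          · exact h4 ⟨hinp, hall⟩
      rw [this]; rfl

end Canon

/-- characterization of τ-inhibitability via canonical regions,
for τ = {nop, res} ∪ ω with ω ⊆ {inp, used, free}. -/
theorem inhibitable_iff_canonical {S E : Type} [Fintype S] [Fintype E]
    (A : TS S E) (hreach : Reachable A)
    (ω : Set Interaction) (hω : ω ⊆ {iInp, iUsed, iFree})
    (e : E) (s : S) (hnotstep : A.delta s e = none) :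
    Inhibitable A ({iNop, iRes} ∪ ω) e s ↔
      ((iInp ∈ ({iNop, iRes} ∪ ω : Set Interaction) ∧
        canonSig A ({iNop, iRes} ∪ ω) {z | ∃ z', A.delta z e = some z'} e = iInp ∧
        ¬ InCl A {z | ∃ z', A.delta z e = some z'} s) ∨
       (iUsed ∈ ({iNop, iRes} ∪ ω : Set Interaction) ∧
        canonSig A ({iNop, iRes} ∪ ω)
          {z | (∃ z', A.delta z e = some z') ∨ (∃ z', A.delta z' e = some z)} e = iUsed ∧
        ¬ InCl A {z | (∃ z', A.delta z e = some z') ∨ (∃ z', A.delta z' e = some z)} s) ∨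
       (iFree ∈ ({iNop, iRes} ∪ ω : Set Interaction) ∧
        canonSig A ({iNop, iRes} ∪ ω) {s} e = iFree)) := by
  constructor
  · rintro ⟨sup, sig, hreg, hnone⟩
    by_cases hex : ∃ z z', A.delta z e = some z'
    · obtain ⟨w, w', hdw⟩ := hex
      rcases tau_cases hω (hreg.1 e) with h | h | h | h | h
      · rw [h] at hnone; simp [iNop] at hnone
      · rw [h] at hnone; simp [iRes] at hnone
      · -- inp case
        left
        have hinpτ : iInp ∈ ({iNop, iRes} ∪ ω : Set Interaction) := h ▸ hreg.1 e
        rw [h] at hnone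
        have hsups : sup s = false := by
          cases hb : sup s
          · rfl
          · rw [hb] at hnone; simp [iInp] at hnone
        have htr : ∀ z z', A.delta z e = some z' → sup z = true ∧ sup z' = false := by
          intro z z' hd
          have ht := hreg.2 z e z' hd
          rw [h] at ht
          cases hb : sup z
          · rw [hb] at ht; simp [iInp] at ht
          · rw [hb] at ht; simp [iInp] at ht; exact ⟨rfl, ht⟩
        have hclsub : ∀ z, InCl A {z | ∃ z', A.delta z e = some z'} z → sup z = true := by
          refine cl_sup_true A hω hreg ?_
          rintro q ⟨q', hd⟩
          exact (htr q q' hd).1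
        have hnotin : ¬ InCl A {z | ∃ z', A.delta z e = some z'} s := by
          intro hin
          rw [hclsub s hin] at hsups
          exact absurd hsups (by simp)
        refine ⟨hinpτ, ?_, hnotin⟩
        have key : ∀ z z', A.delta z e = some z' →
            canonSup A {z | ∃ z', A.delta z e = some z'} z = true ∧
            canonSup A {z | ∃ z', A.delta z e = some z'} z' = false := by
          intro z z' hd
          constructor
          · exact (canonSup_eq_true _ _ _).mpr (InCl.base ⟨z', hd⟩)
          · rw [canonSup_eq_false]
            intro hin
            have h2 := hclsub z' hin
            rw [(htr z z' hd).2] at h2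
            exact absurd h2 (by simp)
        have hng1 : ¬ (iUsed ∈ ({iNop, iRes} ∪ ω : Set Interaction) ∧
            ∀ z z', A.delta z e = some z' →
            canonSup A {z | ∃ z', A.delta z e = some z'} z = true ∧
            canonSup A {z | ∃ z', A.delta z e = some z'} z' = true) := by
          rintro ⟨-, hall⟩
          have h2 := (hall w w' hdw).2
          rw [(key w w' hdw).2] at h2
          exact absurd h2 (by simp)
        have hng2 : ¬ (iFree ∈ ({iNop, iRes} ∪ ω : Set Interaction) ∧
            ∀ z z', A.delta z e = some z' →
            canonSup A {z | ∃ z', A.delta z e = some z'} z = false ∧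
            canonSup A {z | ∃ z', A.delta z e = some z'} z' = false) := by
          rintro ⟨-, hall⟩
          have h2 := (hall w w' hdw).1
          rw [(key w w' hdw).1] at h2
          exact absurd h2 (by simp)
        unfold canonSig
        rw [if_neg hng1, if_neg hng2, if_pos ⟨hinpτ, key⟩]
      · -- used case
        right; left
        have husedτ : iUsed ∈ ({iNop, iRes} ∪ ω : Set Interaction) := h ▸ hreg.1 e
        rw [h] at hnone
        have hsups : sup s = false := by
          cases hb : sup s
          · rfl
          · rw [hb] at hnone; simp [iUsed] at hnone
        have htr : ∀ z z', A.delta z e = some z' → sup z = true ∧ sup z' = true := by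
          intro z z' hd
          have ht := hreg.2 z e z' hd
          rw [h] at ht
          cases hb : sup z
          · rw [hb] at ht; simp [iUsed] at ht
          · rw [hb] at ht; simp [iUsed] at ht; exact ⟨rfl, ht⟩
        have hclsub : ∀ z, InCl A {z | (∃ z', A.delta z e = some z') ∨
            (∃ z', A.delta z' e = some z)} z → sup z = true := by
          refine cl_sup_true A hω hreg ?_
          rintro q (⟨q', hd⟩ | ⟨q', hd⟩)
          · exact (htr q q' hd).1
          · exact (htr q' q hd).2
        have hnotin : ¬ InCl A {z | (∃ z', A.delta z e = some z') ∨
            (∃ z', A.delta z' e = some z)} s := by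
          intro hin
          rw [hclsub s hin] at hsups
          exact absurd hsups (by simp)
        refine ⟨husedτ, ?_, hnotin⟩
        have key : ∀ z z', A.delta z e = some z' →
            canonSup A {z | (∃ z', A.delta z e = some z') ∨ (∃ z', A.delta z' e = some z)} z = true ∧
            canonSup A {z | (∃ z', A.delta z e = some z') ∨ (∃ z', A.delta z' e = some z)} z' = true := by
          intro z z' hd
          exact ⟨(canonSup_eq_true _ _ _).mpr (InCl.base (Or.inl ⟨z', hd⟩)),
                 (canonSup_eq_true _ _ _).mpr (InCl.base (Or.inr ⟨z, hd⟩))⟩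
        unfold canonSig
        rw [if_pos ⟨husedτ, key⟩]
      · -- free case
        right; right
        have hfreeτ : iFree ∈ ({iNop, iRes} ∪ ω : Set Interaction) := h ▸ hreg.1 e
        rw [h] at hnone
        have hsups : sup s = true := by
          cases hb : sup s
          · rw [hb] at hnone; simp [iFree] at hnone
          · rfl
        have htr : ∀ z z', A.delta z e = some z' → sup z = false ∧ sup z' = false := by
          intro z z' hd
          have ht := hreg.2 z e z' hd
          rw [h] at ht
          cases hb : sup z
          · rw [hb] at ht; simp [iFree] at ht; exact ⟨rfl, ht⟩
          · rw [hb] at ht; simp [iFree] at ht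
        have hclsub : ∀ z, InCl A {s} z → sup z = true := by
          refine cl_sup_true A hω hreg ?_
          rintro q hq
          rw [Set.mem_singleton_iff] at hq
          rw [hq]; exact hsups
        have key : ∀ z z', A.delta z e = some z' →
            canonSup A {s} z = false ∧ canonSup A {s} z' = false := by
          intro z z' hd
          constructor <;> rw [canonSup_eq_false] <;> intro hin
          · have h2 := hclsub _ hin
            rw [(htr z z' hd).1] at h2
            exact absurd h2 (by simp)
          · have h2 := hclsub _ hin
            rw [(htr z z' hd).2] at h2
            exact absurd h2 (by simp)
        have hng1 : ¬ (iUsed ∈ ({iNop, iRes} ∪ ω : Set Interaction) ∧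
            ∀ z z', A.delta z e = some z' →
            canonSup A {s} z = true ∧ canonSup A {s} z' = true) := by
          rintro ⟨-, hall⟩
          have h2 := (hall w w' hdw).1
          rw [(key w w' hdw).1] at h2
          exact absurd h2 (by simp)
        refine ⟨hfreeτ, ?_⟩
        unfold canonSig
        rw [if_neg hng1, if_pos ⟨hfreeτ, key⟩]
    · -- no e-transitions at all
      push_neg at hex
      have hsig3 : sig e = iInp ∨ sig e = iUsed ∨ sig e = iFree := by
        rcases tau_cases hω (hreg.1 e) with h | h | h | h | h
        · rw [h] at hnone; simp [iNop] at hnone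
        · rw [h] at hnone; simp [iRes] at hnone
        · exact Or.inl h
        · exact Or.inr (Or.inl h)
        · exact Or.inr (Or.inr h)
      by_cases hu : iUsed ∈ ({iNop, iRes} ∪ ω : Set Interaction)
      · right; left
        refine ⟨hu, ?_, ?_⟩
        · unfold canonSig
          rw [if_pos ⟨hu, fun z z' hd => absurd hd (hex z z')⟩]
        · exact not_inCl_of_empty A (by
            rintro q (⟨q', hd⟩ | ⟨q', hd⟩)
            · exact hex q q' hd
            · exact hex q' q hd) s
      · by_cases hf : iFree ∈ ({iNop, iRes} ∪ ω : Set Interaction)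
        · right; right
          refine ⟨hf, ?_⟩
          unfold canonSig
          rw [if_neg (fun hc => hu hc.1), if_pos ⟨hf, fun z z' hd => absurd hd (hex z z')⟩]
        · left
          have hinp : iInp ∈ ({iNop, iRes} ∪ ω : Set Interaction) := by
            rcases hsig3 with h | h | h
            · exact h ▸ hreg.1 e
            · exact absurd (h ▸ hreg.1 e) hu
            · exact absurd (h ▸ hreg.1 e) hf
          refine ⟨hinp, ?_, ?_⟩
          · unfold canonSig
            rw [if_neg (fun hc => hu hc.1), if_neg (fun hc => hf hc.1),
                if_pos ⟨hinp, fun z z' hd => absurd hd (hex z z')⟩]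
          · exact not_inCl_of_empty A (by rintro q ⟨q', hd⟩; exact hex q q' hd) s
  · rintro (⟨hinp, hsig, hs⟩ | ⟨hused, hsig, hs⟩ | ⟨hfree, hsig⟩)
    · exact ⟨_, _, canon_region A ω _, by
        rw [hsig, (canonSup_eq_false _ _ _).mpr hs]; rfl⟩
    · exact ⟨_, _, canon_region A ω _, by
        rw [hsig, (canonSup_eq_false _ _ _).mpr hs]; rfl⟩
    · exact ⟨_, _, canon_region A ω _, by
        rw [hsig, (canonSup_eq_true A {s} s).mpr (InCl.base (Set.mem_singleton s))]; rfl⟩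
end Aux
end

section
/- Let τ = {nop, swap} ∪ ω be a type of nets with ω ⊆ {inp, out, used, free} and let A be a TS. If (sup, sig) is a τ-region of A, then (sup', sig') is also a τ-region of A, where sup'(s) = 1 − sup(s) for every state s, and sig'(e) = swap if sig(e) ∈ {inp, out, swap} and sig'(e) = nop if sig(e) ∈ {nop, used, free}. -/
lemma ne_of_apply {f g : Interaction} (b : Bool) (h : f b ≠ g b) : f ≠ g :=
  fun he => h (by rw [he])

theorem complement_region' {S E : Type}
    (A : TS S E)
    (ω : Set Interaction) (hω : ω ⊆ {iInp, iOut, iUsed, iFree})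
    (sup : S → Bool) (sig : E → Interaction)
    (hreg : IsRegion A ({iNop, iSwap} ∪ ω) sup sig) :
    IsRegion A ({iNop, iSwap} ∪ ω) (fun s => !(sup s))
      (fun e => if sig e = iInp ∨ sig e = iOut ∨ sig e = iSwap then iSwap else iNop) := by
  obtain ⟨hmem, htr⟩ := hreg
  constructor
  · intro e
    by_cases h : sig e = iInp ∨ sig e = iOut ∨ sig e = iSwap
    · simp only [if_pos h]; left; right; rfl
    · simp only [if_neg h]; left; left; rfl
  · intro s e s' hd
    have h2 := htr s e s' hd
    have h1 := hmem e
    rcases h1 with (h1 | h1) | h1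
    · -- nop
      have hni : sig e ≠ iInp := ne_of_apply false (by rw [h1]; simp [iNop, iInp])
      have hno : sig e ≠ iOut := ne_of_apply true (by rw [h1]; simp [iNop, iOut])
      have hns : sig e ≠ iSwap := ne_of_apply true (by rw [h1]; simp [iNop, iSwap])
      simp only [hni, hno, hns, or_self, if_false]
      rw [h1] at h2
      simp [iNop] at h2 ⊢
      exact h2
    · have : sig e = iSwap := h1
      simp [this, iSwap] at h2 ⊢
      simp [h2]
    · have h4 := hω h1
      simp only [Set.mem_insert_iff, Set.mem_singleton_iff] at h4
      rcases h4 with h | h | h | h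
      · -- inp
        simp only [h, true_or, if_true]
        rw [h] at h2
        simp [iInp] at h2
        rcases h2 with ⟨hb, hb'⟩
        simp [hb, hb', iSwap]
      · simp only [h, true_or, or_true, if_true]
        rw [h] at h2
        simp [iOut] at h2
        rcases h2 with ⟨hb, hb'⟩
        simp [hb, hb', iSwap]
      · -- used
        have hni : sig e ≠ iInp := ne_of_apply true (by rw [h]; simp [iUsed, iInp])
        have hno : sig e ≠ iOut := ne_of_apply false (by rw [h]; simp [iUsed, iOut])
        have hns : sig e ≠ iSwap := ne_of_apply false (by rw [h]; simp [iUsed, iSwap])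
        simp only [hni, hno, hns, or_self, if_false]
        rw [h] at h2
        simp [iUsed] at h2
        rcases h2 with ⟨hb, hb'⟩
        simp [hb, hb', iNop]
      · have hni : sig e ≠ iInp := ne_of_apply false (by rw [h]; simp [iFree, iInp])
        have hno : sig e ≠ iOut := ne_of_apply false (by rw [h]; simp [iFree, iOut])
        have hns : sig e ≠ iSwap := ne_of_apply true (by rw [h]; simp [iFree, iSwap])
        simp only [hni, hno, hns, or_self, if_false]
        rw [h] at h2
        simp [iFree] at h2
        rcases h2 with ⟨hb, hb'⟩
        simp [hb, hb', iNop]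

open Classical in
/-- complementing a region for τ = {nop, swap} ∪ ω, ω ⊆ {inp, out, used, free}. -/
theorem complement_region {S E : Type} [Fintype S] [Fintype E]
    (A : TS S E) (hreach : Reachable A)
    (ω : Set Interaction) (hω : ω ⊆ {iInp, iOut, iUsed, iFree})
    (sup : S → Bool) (sig : E → Interaction)
    (hreg : IsRegion A ({iNop, iSwap} ∪ ω) sup sig) :
    IsRegion A ({iNop, iSwap} ∪ ω) (fun s => !(sup s))
      (fun e => if sig e = iInp ∨ sig e = iOut ∨ sig e = iSwap then iSwap else iNop) := by
  exact complement_region' A ω hω sup sig hreg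
end

section
/- Let A be a TS, let T be a spanning tree of A rooted at s0, and for every state s let ψ_s : E → 𝔽₂ assign to each event e the parity of the number of occurrences of e on the unique T-path from s0 to s. If (sup, sig) is a region of A whose signature takes values in {nop, swap}, then ρ : E → 𝔽₂ defined by ρ(e) = 1 if sig(e) = swap and ρ(e) = 0 if sig(e) = nop satisfies the chord equation ρ(e) + Σ_{e' ∈ E} (ψ_s(e') + ψ_{s'}(e'))·ρ(e') = 0 in 𝔽₂ for every chord s --e--> s' of A (a transition not in T), and moreover sup(s) = sup(s0) + Σ_{e ∈ E} ψ_s(e)·ρ(e) in 𝔽₂ for every state s. -/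
/-! Spanning trees and path parities.  A transition is a triple (s, e, s') with
δ(s, e) = s'.  `IsPathFrom T s l t` states that `l` is a directed path from `s`
to `t` consisting of transitions from `T`. -/

def IsPathFrom {S E : Type} (T : Set (S × E × S)) : S → List (S × E × S) → S → Prop
  | s, [], t => s = t
  | s, a :: l, t => a.1 = s ∧ a ∈ T ∧ IsPathFrom T a.2.2 l t

/-- every region with signature values in {nop, swap} induces a
solution ρ of all chord equations (ρ(e) = 1 iff sig(e) = swap), and its support
satisfies sup(s) = sup(s0) + Σ_{e} ψ_s(e)·ρ(e) over 𝔽₂. -/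
theorem chord_equations_from_region {S E : Type} [Fintype S] [Fintype E] [DecidableEq E]
    (A : TS S E) (hreach : Reachable A)
    (T : Set (S × E × S))
    (hT : ∀ a ∈ T, A.delta a.1 a.2.1 = some a.2.2)
    (htree : ∀ s : S, ∃! l : List (S × E × S), IsPathFrom T A.init l s)
    (ψ : S → E → ZMod 2)
    (hψ : ∀ (s : S) (l : List (S × E × S)), IsPathFrom T A.init l s →
      ∀ e : E, ψ s e = (l.countP (fun a => decide (a.2.1 = e)) : ZMod 2))
    (sup : S → Bool) (sig : E → Interaction)
    (hreg : IsRegion A {iNop, iSwap} sup sig) :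
    (∀ (s : S) (e : E) (s' : S), A.delta s e = some s' → (s, e, s') ∉ T →
      (if sig e = iSwap then (1 : ZMod 2) else 0) +
        ∑ e' : E, (ψ s e' + ψ s' e') *
          (if sig e' = iSwap then (1 : ZMod 2) else 0) = 0) ∧
    ∀ s : S, (if sup s then (1 : ZMod 2) else 0) =
      (if sup A.init then (1 : ZMod 2) else 0) +
        ∑ e : E, ψ s e * (if sig e = iSwap then (1 : ZMod 2) else 0) := by

  classical
  set ρ : E → ZMod 2 := fun e => if sig e = iSwap then 1 else 0 with hρ
  set b : S → ZMod 2 := fun s => if sup s then 1 else 0 with hb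
  have hnopswap : iNop ≠ iSwap := by
    intro h
    have := congrFun h false
    simp [iNop, iSwap] at this
  have hstep : ∀ s e s', A.delta s e = some s' → b s' = b s + ρ e := by
    intro s e s' h
    have h2 := hreg.2 s e s' h
    have h1 := hreg.1 e
    simp only [Set.mem_insert_iff, Set.mem_singleton_iff] at h1
    rcases h1 with h1 | h1
    · rw [h1] at h2
      simp only [iNop, Option.some.injEq] at h2
      simp [hρ, hb, h1, hnopswap, h2]
    · rw [h1] at h2
      simp only [iSwap, Option.some.injEq] at h2
      simp only [hρ, hb, h1, if_pos rfl, ← h2]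
      cases sup s <;> simp <;> decide
  have hpath : ∀ (l : List (S × E × S)) (s t : S), IsPathFrom T s l t →
      b t = b s + ∑ e : E, (l.countP (fun a => decide (a.2.1 = e)) : ZMod 2) * ρ e := by
    intro l
    induction l with
    | nil =>
      intro s t h
      simp only [IsPathFrom] at h
      subst h
      simp
    | cons a l ih =>
      intro s t h
      obtain ⟨h1, h2, h3⟩ := h
      have hb2 : b a.2.2 = b s + ρ a.2.1 := by
        have := hT a h2
        rw [h1] at this
        exact hstep s a.2.1 a.2.2 this
      rw [ih a.2.2 t h3, hb2]
      have hc : ∀ e : E, ((a :: l).countP (fun x => decide (x.2.1 = e)) : ZMod 2)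
          = (l.countP (fun x => decide (x.2.1 = e)) : ZMod 2)
            + (if a.2.1 = e then 1 else 0) := by
        intro e
        rw [List.countP_cons]
        push_cast
        by_cases h : a.2.1 = e <;> simp [h]
      simp_rw [hc, add_mul, Finset.sum_add_distrib]
      have hs : (∑ e : E, (if a.2.1 = e then (1 : ZMod 2) else 0) * ρ e) = ρ a.2.1 := by
        rw [Finset.sum_eq_single a.2.1]
        · simp
        · intro x _ hx
          simp [Ne.symm hx]
        · simp
      rw [hs]
      ring
  have hmain : ∀ s, b s = b A.init + ∑ e, ψ s e * ρ e := by
    intro s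
    obtain ⟨l, hl, -⟩ := htree s
    have hp := hpath l A.init s hl
    have hq := hψ s l hl
    simp_rw [hq]
    exact hp
  refine ⟨?_, hmain⟩
  intro s e s' hde _
  have e1 := hmain s
  have e2 := hmain s'
  have e3 := hstep s e s' hde
  simp_rw [add_mul, Finset.sum_add_distrib]
  have h2x : ∀ x : ZMod 2, x + x = 0 := by decide
  have hs1 : ∑ e' : E, ψ s e' * ρ e' = b A.init + b s := by
    rw [e1, ← add_assoc, h2x, zero_add]
  have hs2 : ∑ e' : E, ψ s' e' * ρ e' = b A.init + b s' := by
    rw [e2, ← add_assoc, h2x, zero_add]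
  show ρ e + (∑ e' : E, ψ s e' * ρ e' + ∑ e' : E, ψ s' e' * ρ e') = 0
  rw [hs1, hs2, e3]
  linear_combination h2x (b A.init) + h2x (b s) + h2x (ρ e)
end

section
/- Let τ = {nop, swap} ∪ ω be a type of nets with ω ⊆ {inp, out, used, free} and let A be a TS. Two distinct states s, s' of A are τ-separable if and only if they are {nop, swap}-separable. -/
section AuxNe

lemma ne_nop_inp : iNop ≠ iInp := fun h => by simpa [iNop, iInp] using congrFun h false
lemma ne_nop_out : iNop ≠ iOut := fun h => by simpa [iNop, iOut] using congrFun h true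
lemma ne_nop_used : iNop ≠ iUsed := fun h => by simpa [iNop, iUsed] using congrFun h false
lemma ne_nop_free : iNop ≠ iFree := fun h => by simpa [iNop, iFree] using congrFun h true
lemma ne_swap_inp : iSwap ≠ iInp := fun h => by simpa [iSwap, iInp] using congrFun h false
lemma ne_swap_out : iSwap ≠ iOut := fun h => by simpa [iSwap, iOut] using congrFun h true
lemma ne_swap_used : iSwap ≠ iUsed := fun h => by simpa [iSwap, iUsed] using congrFun h false
lemma ne_swap_free : iSwap ≠ iFree := fun h => by simpa [iSwap, iFree] using congrFun h true
lemma ne_inp_used : iInp ≠ iUsed := fun h => by simpa [iInp, iUsed] using congrFun h true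
lemma ne_inp_free : iInp ≠ iFree := fun h => by simpa [iInp, iFree] using congrFun h true
lemma ne_inp_out : iInp ≠ iOut := fun h => by simpa [iInp, iOut] using congrFun h true
lemma ne_out_used : iOut ≠ iUsed := fun h => by simpa [iOut, iUsed] using congrFun h false
lemma ne_out_free : iOut ≠ iFree := fun h => by simpa [iOut, iFree] using congrFun h false
lemma ne_used_free : iUsed ≠ iFree := fun h => by simpa [iUsed, iFree] using congrFun h true

end AuxNe

/-- for τ = {nop, swap} ∪ ω with ω ⊆ {inp, out, used, free},
two distinct states are τ-separable iff they are {nop, swap}-separable. -/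
theorem separable_iff_nop_swap_separable {S E : Type} [Fintype S] [Fintype E]
    (A : TS S E) (hreach : Reachable A)
    (ω : Set Interaction) (hω : ω ⊆ {iInp, iOut, iUsed, iFree})
    (s s' : S) (hne : s ≠ s') :
    Separable A ({iNop, iSwap} ∪ ω) s s' ↔ Separable A {iNop, iSwap} s s' := by
  constructor
  · rintro ⟨sup, sig, ⟨hmem, htr⟩, hsep⟩
    classical
    refine ⟨sup, fun e => if sig e = iUsed ∨ sig e = iFree then iNop
      else if sig e = iInp ∨ sig e = iOut then iSwap else sig e, ⟨?_, ?_⟩, hsep⟩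
    · intro e
      by_cases h1 : sig e = iUsed ∨ sig e = iFree
      · simp only [h1, if_true]; left; rfl
      · by_cases h2 : sig e = iInp ∨ sig e = iOut
        · simp only [h1, h2, if_false, if_true]; right; rfl
        · simp only [h1, h2, if_false]
          rcases hmem e with h | h
          · rcases h with h | h
            · left; exact h
            · right; exact h
          · exact absurd (hω h) (by
              intro hc
              rcases hc with hc | hc | hc | hc <;> simp_all)
    · intro a e b hab
      have h := htr a e b hab
      have hm := hmem e
      simp only [Set.mem_union, Set.mem_insert_iff, Set.mem_singleton_iff] at hm
      rcases hm with (hm | hm) | hm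
      · simp only [hm] at h ⊢
        rw [if_neg (by simp [ne_nop_used, ne_nop_free]),
          if_neg (by simp [ne_nop_inp, ne_nop_out])]; exact h
      · simp only [hm] at h ⊢
        rw [if_neg (by simp [ne_swap_used, ne_swap_free]),
          if_neg (by simp [ne_swap_inp, ne_swap_out])]; exact h
      · have hm4 := hω hm
        simp only [Set.mem_insert_iff, Set.mem_singleton_iff] at hm4
        rcases hm4 with hm' | hm' | hm' | hm' <;> simp only [hm'] at h ⊢
        · rw [if_neg (by simp [ne_inp_used, ne_inp_free]), if_pos (Or.inl trivial)]
          cases hs : sup a <;> simp_all [iInp, iSwap]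
        · rw [if_neg (by simp [ne_out_used, ne_out_free]), if_pos (Or.inr trivial)]
          cases hs : sup a <;> simp_all [iOut, iSwap]
        · rw [if_pos (Or.inl trivial)]
          cases hs : sup a <;> simp_all [iUsed, iNop]
        · rw [if_pos (Or.inr trivial)]
          cases hs : sup a <;> simp_all [iFree, iNop]
  · rintro ⟨sup, sig, ⟨hmem, htr⟩, hsep⟩
    exact ⟨sup, sig, ⟨fun e => Set.mem_union_left _ (hmem e), htr⟩, hsep⟩
end

section
/- Let τ = {nop, inp, free} or τ = {nop, inp, used, free}, and let φ be a cubic monotone 3-CNF with m clauses. The key event k is τ-inhibitable at the key state q in the TS A_φ if and only if φ has a one-in-three model. -/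
/-! The TS A_φ for a cubic monotone 3-CNF φ with m clauses.  The clauses are
given by a map X : Fin m → Fin 3 → V listing the three variables X_{i,0},
X_{i,1}, X_{i,2} of every clause ζ_i. -/

inductive PState (m : ℕ) where
  | s0 | s1 | q
  | t (i : Fin m) (j : Fin 9)

inductive PEvent (m : ℕ) (V : Type) where
  | k | h
  | hc (i : Fin m)
  | r (i : Fin m)
  | var (v : V)

/-- The clause gadget of clause i: for each permutation (α, β, γ) of {0,1,2}
there is a path labeled X_{i,α}, X_{i,β}, X_{i,γ} from t_{i,0} to t_{i,5}. -/
def gadget {m : ℕ} {V : Type} [DecidableEq V] (X : Fin m → Fin 3 → V)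
    (i : Fin m) (j : Fin 9) (v : V) : Option (PState m) :=
  if j = 0 then
    if v = X i 0 then some (.t i 1)
    else if v = X i 1 then some (.t i 7)
    else if v = X i 2 then some (.t i 3) else none
  else if j = 1 then
    if v = X i 1 then some (.t i 2)
    else if v = X i 2 then some (.t i 4) else none
  else if j = 2 then
    if v = X i 2 then some (.t i 5) else none
  else if j = 3 then
    if v = X i 0 then some (.t i 4)
    else if v = X i 1 then some (.t i 6) else none
  else if j = 4 then
    if v = X i 1 then some (.t i 5) else none
  else if j = 6 then
    if v = X i 0 then some (.t i 5) else none
  else if j = 7 then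
    if v = X i 0 then some (.t i 2)
    else if v = X i 2 then some (.t i 6) else none
  else none

def Aphi {m : ℕ} {V : Type} [DecidableEq V] (X : Fin m → Fin 3 → V) :
    TS (PState m) (PEvent m V) where
  delta := fun s e =>
    match s, e with
    | .s0, .k => some .s1
    | .s0, .h => some .q
    | .s0, .r i => some (.t i 0)
    | .s1, .r i => some (.t i 8)
    | .q, .hc i => some (.t i 5)
    | .t i j, .k => if j = 0 then some (.t i 8) else none
    | .t i j, .var v => gadget X i j v
    | _, _ => none
  init := .s0

/-- φ is a cubic monotone 3-CNF: each clause consists of three distinct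
variables and every variable is a member of exactly three clauses. -/
def CubicMonotone {m : ℕ} {V : Type} [DecidableEq V] [Fintype V]
    (X : Fin m → Fin 3 → V) : Prop :=
  (∀ i : Fin m, Function.Injective (X i)) ∧
  (∀ v : V,
    (Finset.univ.filter (fun p : Fin m × Fin 3 => X p.1 p.2 = v)).card = 3)

/-- M is a one-in-three model of φ: it hits every clause exactly once. -/
def OneInThree {m : ℕ} {V : Type} (X : Fin m → Fin 3 → V) (M : Set V) : Prop :=
  ∀ i : Fin m, ∃! j : Fin 3, X i j ∈ M

/-! Auxiliary definitions for the backward direction -/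

def mySup {m : ℕ} {V : Type} (X : Fin m → Fin 3 → V) (p : V → Bool) :
    PState m → Bool
  | .s0 => true | .s1 => false | .q => false
  | .t i j =>
    if j = 0 then true
    else if j = 1 then !p (X i 0)
    else if j = 7 then !p (X i 1)
    else if j = 3 then !p (X i 2)
    else if j = 2 then p (X i 2)
    else if j = 4 then p (X i 1)
    else if j = 6 then p (X i 0)
    else false

def mySig {m : ℕ} {V : Type} (p : V → Bool) : PEvent m V → Interaction
  | .k => iInp | .h => iInp | .hc _ => iNop | .r _ => iNop
  | .var v => if p v then iInp else iNop

lemma my_region {m : ℕ} {V : Type} [DecidableEq V] [Fintype V]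
    (X : Fin m → Fin 3 → V) (p : V → Bool)
    (hp : ∀ i : Fin m,
      (p (X i 0) = true ∧ p (X i 1) = false ∧ p (X i 2) = false) ∨
      (p (X i 0) = false ∧ p (X i 1) = true ∧ p (X i 2) = false) ∨
      (p (X i 0) = false ∧ p (X i 1) = false ∧ p (X i 2) = true)) :
    ∀ s e s', (Aphi X).delta s e = some s' →
      mySig p e (mySup X p s) = some (mySup X p s') := by
  rintro s e s' hd
  cases s with
  | s0 => cases e <;> simp [Aphi] at hd <;> subst hd <;> rfl
  | s1 => cases e <;> simp [Aphi] at hd; subst hd; rfl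
  | q => cases e <;> simp [Aphi] at hd; subst hd; rfl
  | t i j =>
    cases e with
    | k =>
      simp only [Aphi] at hd
      split at hd
      · next hj => cases hd; subst hj; rfl
      · exact absurd hd (by simp)
    | var v =>
      have hd' : gadget X i j v = some s' := hd
      clear hd
      unfold gadget at hd'
      split_ifs at hd' <;>
        first
        | exact Option.noConfusion hd'
        | (cases hd'; subst_vars;
           rcases hp i with ⟨m0, m1, m2⟩ | ⟨m0, m1, m2⟩ | ⟨m0, m1, m2⟩ <;>
           simp [mySup, mySig, iInp, iNop, m0, m1, m2])
    | h => exact absurd hd (by simp [Aphi])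
    | hc i' => exact absurd hd (by simp [Aphi])
    | r i' => exact absurd hd (by simp [Aphi])

/-! Forward direction auxiliaries -/

lemma mem_four {τ : Set Interaction}
    (hτ : τ = {iNop, iInp, iFree} ∨ τ = {iNop, iInp, iUsed, iFree})
    {f : Interaction} (hf : f ∈ τ) :
    f = iNop ∨ f = iInp ∨ f = iUsed ∨ f = iFree := by
  rcases hτ with rfl | rfl <;>
    simp only [Set.mem_insert_iff, Set.mem_singleton_iff] at hf <;> tauto

lemma eu3 {P : Fin 3 → Prop}
    (h : (P 0 ∧ ¬P 1 ∧ ¬P 2) ∨ (¬P 0 ∧ P 1 ∧ ¬P 2) ∨ (¬P 0 ∧ ¬P 1 ∧ P 2)) :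
    ∃! j, P j := by
  rcases h with ⟨h0, h1, h2⟩ | ⟨h0, h1, h2⟩ | ⟨h0, h1, h2⟩
  · exact ⟨0, h0, by intro y hy; fin_cases y <;> tauto⟩
  · exact ⟨1, h1, by intro y hy; fin_cases y <;> tauto⟩
  · exact ⟨2, h2, by intro y hy; fin_cases y <;> tauto⟩

lemma clause_analysis (f0 f1 f2 : Interaction)
    (h0 : f0 = iNop ∨ f0 = iInp ∨ f0 = iUsed ∨ f0 = iFree)
    (h1 : f1 = iNop ∨ f1 = iInp ∨ f1 = iUsed ∨ f1 = iFree)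
    (h2 : f2 = iNop ∨ f2 = iInp ∨ f2 = iUsed ∨ f2 = iFree)
    (a1 a2 a3 a4 a6 a7 : Bool)
    (e01 : f0 true = some a1) (e07 : f1 true = some a7) (e03 : f2 true = some a3)
    (e12 : f1 a1 = some a2) (e14 : f2 a1 = some a4)
    (e25 : f2 a2 = some false)
    (e34 : f0 a3 = some a4) (e36 : f1 a3 = some a6)
    (e45 : f1 a4 = some false)
    (e65 : f0 a6 = some false)
    (e72 : f0 a7 = some a2) (e76 : f2 a7 = some a6) :
    (f0 true = some false ∧ ¬ f1 true = some false ∧ ¬ f2 true = some false) ∨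
    (¬ f0 true = some false ∧ f1 true = some false ∧ ¬ f2 true = some false) ∨
    (¬ f0 true = some false ∧ ¬ f1 true = some false ∧ f2 true = some false) := by
  rcases h0 with rfl|rfl|rfl|rfl <;> rcases h1 with rfl|rfl|rfl|rfl <;>
    rcases h2 with rfl|rfl|rfl|rfl <;>
    revert e01 e07 e03 e12 e14 e25 e34 e36 e45 e65 e72 e76 <;>
    revert a1 a2 a3 a4 a6 a7 <;> decide

lemma forward {m : ℕ} {V : Type} [DecidableEq V] [Fintype V]
    (X : Fin m → Fin 3 → V) (hcubic : CubicMonotone X)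
    (τ : Set Interaction)
    (hτ : τ = {iNop, iInp, iFree} ∨ τ = {iNop, iInp, iUsed, iFree})
    (h : Inhibitable (Aphi X) τ PEvent.k PState.q) :
    ∃ M : Set V, OneInThree X M := by
  obtain ⟨sup, sig, ⟨hmem, hreg⟩, hk⟩ := h
  have four : ∀ e, sig e = iNop ∨ sig e = iInp ∨ sig e = iUsed ∨ sig e = iFree :=
    fun e => mem_four hτ (hmem e)
  have hks : sig .k (sup .s0) = some (sup .s1) := hreg _ _ _ rfl
  have hh : sig .h (sup .s0) = some (sup .q) := hreg _ _ _ rfl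
  -- sig k is inp or used, and sup q = false
  have hmain : (sig .k = iInp ∨ sig .k = iUsed) ∧ sup .q = false := by
    rcases four .k with hK | hK | hK | hK
    · rw [hK] at hk; simp [iNop] at hk
    · refine ⟨Or.inl hK, ?_⟩
      cases hqv : sup PState.q
      · rfl
      · rw [hK, hqv] at hk; simp [iInp] at hk
    · refine ⟨Or.inr hK, ?_⟩
      cases hqv : sup PState.q
      · rfl
      · rw [hK, hqv] at hk; simp [iUsed] at hk
    · exfalso
      have hqv : sup PState.q = true := by
        cases hqv : sup PState.q
        · rw [hK, hqv] at hk; simp [iFree] at hk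
        · rfl
      have hs0 : sup PState.s0 = true := by
        cases hs0v : sup PState.s0
        · rw [hs0v, hqv] at hh
          rcases four .h with hH | hH | hH | hH <;> rw [hH] at hh <;>
            simp [iNop, iInp, iUsed, iFree] at hh
        · rfl
      rw [hK, hs0] at hks; simp [iFree] at hks
  obtain ⟨hkiu, hq0⟩ := hmain
  refine ⟨{v | sig (.var v) true = some false}, fun i => ?_⟩
  have hne : ∀ a b : Fin 3, a ≠ b → X i a ≠ X i b :=
    fun a b hab h => hab (hcubic.1 i h)
  -- sup at t i 0 is true
  have hkt : sig .k (sup (.t i 0)) = some (sup (.t i 8)) := hreg _ _ _ (by simp [Aphi])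
  have ht0 : sup (.t i 0) = true := by
    cases ht0v : sup (.t i 0)
    · rw [ht0v] at hkt
      rcases hkiu with hK | hK <;> rw [hK] at hkt <;> simp [iInp, iUsed] at hkt
    · rfl
  -- sup at t i 5 is false
  have hhc : sig (.hc i) (sup .q) = some (sup (.t i 5)) := hreg _ _ _ rfl
  have ht5 : sup (.t i 5) = false := by
    rw [hq0] at hhc
    rcases four (.hc i) with hH | hH | hH | hH <;> rw [hH] at hhc <;>
      simp [iNop, iInp, iUsed, iFree] at hhc <;> first | exact hhc | exact hhc.symm
  -- the 12 gadget transitions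
  have E01 : sig (.var (X i 0)) (sup (.t i 0)) = some (sup (.t i 1)) :=
    hreg _ _ _ (by simp [Aphi, gadget])
  have E07 : sig (.var (X i 1)) (sup (.t i 0)) = some (sup (.t i 7)) :=
    hreg _ _ _ (by simp [Aphi, gadget, hne 1 0 (by decide)])
  have E03 : sig (.var (X i 2)) (sup (.t i 0)) = some (sup (.t i 3)) :=
    hreg _ _ _ (by simp [Aphi, gadget, hne 2 0 (by decide), hne 2 1 (by decide)])
  have E12 : sig (.var (X i 1)) (sup (.t i 1)) = some (sup (.t i 2)) :=
    hreg _ _ _ (by simp [Aphi, gadget])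
  have E14 : sig (.var (X i 2)) (sup (.t i 1)) = some (sup (.t i 4)) :=
    hreg _ _ _ (by simp [Aphi, gadget, hne 2 1 (by decide)])
  have E25 : sig (.var (X i 2)) (sup (.t i 2)) = some (sup (.t i 5)) :=
    hreg _ _ _ (by simp [Aphi, gadget])
  have E34 : sig (.var (X i 0)) (sup (.t i 3)) = some (sup (.t i 4)) :=
    hreg _ _ _ (by simp [Aphi, gadget])
  have E36 : sig (.var (X i 1)) (sup (.t i 3)) = some (sup (.t i 6)) :=
    hreg _ _ _ (by simp [Aphi, gadget, hne 1 0 (by decide)])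
  have E45 : sig (.var (X i 1)) (sup (.t i 4)) = some (sup (.t i 5)) :=
    hreg _ _ _ (by simp [Aphi, gadget])
  have E65 : sig (.var (X i 0)) (sup (.t i 6)) = some (sup (.t i 5)) :=
    hreg _ _ _ (by simp [Aphi, gadget])
  have E72 : sig (.var (X i 0)) (sup (.t i 7)) = some (sup (.t i 2)) :=
    hreg _ _ _ (by simp [Aphi, gadget])
  have E76 : sig (.var (X i 2)) (sup (.t i 7)) = some (sup (.t i 6)) :=
    hreg _ _ _ (by simp [Aphi, gadget, hne 2 0 (by decide)])
  rw [ht0] at E01 E07 E03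
  rw [ht5] at E25 E45 E65
  exact eu3 (clause_analysis _ _ _ (four _) (four _) (four _)
    (sup (.t i 1)) (sup (.t i 2)) (sup (.t i 3)) (sup (.t i 4)) (sup (.t i 6)) (sup (.t i 7))
    E01 E07 E03 E12 E14 E25 E34 E36 E45 E65 E72 E76)


lemma backward {m : ℕ} {V : Type} [DecidableEq V] [Fintype V]
    (X : Fin m → Fin 3 → V) (hcubic : CubicMonotone X)
    (τ : Set Interaction)
    (hτ : τ = {iNop, iInp, iFree} ∨ τ = {iNop, iInp, iUsed, iFree})
    (h : ∃ M : Set V, OneInThree X M) :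
    Inhibitable (Aphi X) τ PEvent.k PState.q := by
  classical
  obtain ⟨M, hM⟩ := h
  set p : V → Bool := fun v => decide (v ∈ M) with hp_def
  have hp : ∀ i : Fin m,
      (p (X i 0) = true ∧ p (X i 1) = false ∧ p (X i 2) = false) ∨
      (p (X i 0) = false ∧ p (X i 1) = true ∧ p (X i 2) = false) ∨
      (p (X i 0) = false ∧ p (X i 1) = false ∧ p (X i 2) = true) := by
    intro i
    obtain ⟨j, hj, hu⟩ := hM i
    fin_cases j
    · exact Or.inl ⟨by simp only [hp_def, decide_eq_true_eq]; exact hj,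
        by simp only [hp_def, decide_eq_false_iff_not]; exact fun h => absurd (hu 1 h) (by decide),
        by simp only [hp_def, decide_eq_false_iff_not]; exact fun h => absurd (hu 2 h) (by decide)⟩
    · exact Or.inr (Or.inl ⟨by simp only [hp_def, decide_eq_false_iff_not]; exact fun h => absurd (hu 0 h) (by decide),
        by simp only [hp_def, decide_eq_true_eq]; exact hj,
        by simp only [hp_def, decide_eq_false_iff_not]; exact fun h => absurd (hu 2 h) (by decide)⟩)
    · exact Or.inr (Or.inr ⟨by simp only [hp_def, decide_eq_false_iff_not]; exact fun h => absurd (hu 0 h) (by decide),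
        by simp only [hp_def, decide_eq_false_iff_not]; exact fun h => absurd (hu 1 h) (by decide),
        by simp only [hp_def, decide_eq_true_eq]; exact hj⟩)
  refine ⟨mySup X p, mySig p, ⟨?_, my_region X p hp⟩, rfl⟩
  intro e
  have hnop : iNop ∈ τ := by rcases hτ with rfl | rfl <;> simp [allInteractions]
  have hinp : iInp ∈ τ := by
    rcases hτ with rfl | rfl <;>
      simp [Set.mem_insert_iff, Set.mem_singleton_iff] <;> tauto
  cases e with
  | k => exact hinp
  | h => exact hinp
  | hc i => exact hnop
  | r i => exact hnop
  | var v =>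
    show (if p v then iInp else iNop) ∈ τ
    split <;> [exact hinp; exact hnop]

/-- k is τ-inhibitable at q in A_φ iff φ has a one-in-three model,
for τ = {nop, inp, free} or τ = {nop, inp, used, free}. -/
theorem key_inhibitable_iff_model {m : ℕ} {V : Type} [DecidableEq V] [Fintype V]
    (X : Fin m → Fin 3 → V) (hcubic : CubicMonotone X)
    (τ : Set Interaction)
    (hτ : τ = {iNop, iInp, iFree} ∨ τ = {iNop, iInp, iUsed, iFree}) :
    Inhibitable (Aphi X) τ PEvent.k PState.q ↔ ∃ M : Set V, OneInThree X M := by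
  exact ⟨forward X hcubic τ hτ, backward X hcubic τ hτ⟩
end

section
/- Let τ = {nop, inp, free} or τ = {nop, inp, used, free}, and let φ be a cubic monotone 3-CNF with m clauses. If the key event k is τ-inhibitable at the key state q in the TS A_φ, then A_φ has the τ-ESSP and the τ-SSP. -/
namespace KeyHelper

def pat : Option (Fin 3) → Fin 9 → Bool
  | none, j => !(j == 8)
  | some p, j =>
    if p = 0 then j == 0 || j == 3 || j == 6 || j == 7
    else if p = 1 then j == 0 || j == 1 || j == 3 || j == 4
    else j == 0 || j == 1 || j == 2 || j == 7

def Edge : Fin 3 → Fin 9 → Fin 9 → Prop := fun p j j' =>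
  (p = 0 ∧ ((j = 0 ∧ j' = 1) ∨ (j = 3 ∧ j' = 4) ∨ (j = 6 ∧ j' = 5) ∨ (j = 7 ∧ j' = 2))) ∨
  (p = 1 ∧ ((j = 0 ∧ j' = 7) ∨ (j = 1 ∧ j' = 2) ∨ (j = 3 ∧ j' = 6) ∨ (j = 4 ∧ j' = 5))) ∨
  (p = 2 ∧ ((j = 0 ∧ j' = 3) ∨ (j = 1 ∧ j' = 4) ∨ (j = 2 ∧ j' = 5) ∨ (j = 7 ∧ j' = 6)))

instance : ∀ p j j', Decidable (Edge p j j') := by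
  unfold Edge; infer_instance

lemma edge_inp : ∀ p j j', Edge p j j' → pat (some p) j = true ∧ pat (some p) j' = false := by
  decide

lemma edge_nop : ∀ (d : Option (Fin 3)) p j j', Edge p j j' → d ≠ some p → pat d j = pat d j' := by
  decide

lemma pat_k : ∀ d : Option (Fin 3), pat d 0 = true ∧ pat d 8 = false := by decide

lemma pat_t5 : ∀ p : Fin 3, pat (some p) 5 = false := by decide

lemma exists_pat_false : ∀ j : Fin 9, j ≠ 0 → ∃ p, pat (some p) j = false := by decide

lemma pat_sep : ∀ j j' : Fin 9, j ≠ j' →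
    pat (some 0) j ≠ pat (some 0) j' ∨ pat (some 1) j ≠ pat (some 1) j' ∨
    pat (some 2) j ≠ pat (some 2) j' ∨ pat none j ≠ pat none j' := by decide

variable {m : ℕ} {V : Type} [DecidableEq V]

lemma gadget_cases {X : Fin m → Fin 3 → V} {i : Fin m} {j : Fin 9} {v : V} {s' : PState m}
    (h : gadget X i j v = some s') :
    ∃ p j', v = X i p ∧ s' = PState.t i j' ∧ Edge p j j' := by
  unfold gadget at h
  split_ifs at h <;>
    first
      | exact Option.noConfusion h
      | (subst_vars
         exact ⟨_, _, rfl, (Option.some.inj h).symm, by decide⟩)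


lemma gadget_isSome {X : Fin m → Fin 3 → V} {i : Fin m} (hinj : Function.Injective (X i))
    {j : Fin 9} {p : Fin 3} (hp : pat (some p) j = true) : gadget X i j (X i p) ≠ none := by
  have h01 : X i 0 ≠ X i 1 := fun h => absurd (hinj h) (by decide)
  have h02 : X i 0 ≠ X i 2 := fun h => absurd (hinj h) (by decide)
  have h10 : X i 1 ≠ X i 0 := fun h => absurd (hinj h) (by decide)
  have h12 : X i 1 ≠ X i 2 := fun h => absurd (hinj h) (by decide)
  have h20 : X i 2 ≠ X i 0 := fun h => absurd (hinj h) (by decide)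
  have h21 : X i 2 ≠ X i 1 := fun h => absurd (hinj h) (by decide)
  fin_cases p <;> fin_cases j <;>
    simp_all [gadget, pat, h01, h02, h10, h12, h20, h21]

def dropF (X : Fin m → Fin 3 → V) (Wb : V → Bool) (i : Fin m) : Option (Fin 3) :=
  if Wb (X i 0) then some 0 else if Wb (X i 1) then some 1 else
    if Wb (X i 2) then some 2 else none

lemma dropF_eq {X : Fin m → Fin 3 → V} {Wb : V → Bool} {i : Fin m} {p : Fin 3}
    (huniq : ∀ a b : Fin 3, Wb (X i a) → Wb (X i b) → a = b)
    (hp : Wb (X i p) = true) : dropF X Wb i = some p := by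
  unfold dropF
  by_cases h0 : Wb (X i 0) = true
  · have e : (0 : Fin 3) = p := huniq _ _ h0 hp
    simp [h0, ← e]
  · by_cases h1 : Wb (X i 1) = true
    · have e : (1 : Fin 3) = p := huniq _ _ h1 hp
      simp [h0, h1, ← e]
    · by_cases h2 : Wb (X i 2) = true
      · have e : (2 : Fin 3) = p := huniq _ _ h2 hp
        simp [h0, h1, h2, ← e]
      · exact absurd hp (by fin_cases p <;> simp_all)

lemma dropF_some {X : Fin m → Fin 3 → V} {Wb : V → Bool} {i : Fin m} {p : Fin 3}
    (h : dropF X Wb i = some p) : Wb (X i p) = true := by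
  unfold dropF at h
  split_ifs at h <;> (cases h; simp_all)

lemma dropF_isSome {X : Fin m → Fin 3 → V} {Wb : V → Bool} {i : Fin m}
    (h : ∃ p, Wb (X i p) = true) : (dropF X Wb i).isSome := by
  obtain ⟨p, hp⟩ := h
  unfold dropF
  split_ifs <;> first | rfl | (fin_cases p <;> simp_all)


set_option linter.unusedSectionVars false

def supA (X : Fin m → Fin 3 → V) (Wb : V → Bool) (qb : Bool) : PState m → Bool
  | .s0 => true
  | .s1 => false
  | .q => qb
  | .t i j => pat (dropF X Wb i) j

def sigA (X : Fin m → Fin 3 → V) (Wb : V → Bool) (qb : Bool) : PEvent m V → Interaction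
  | .k => iInp
  | .h => if qb then iNop else iInp
  | .hc i => if qb && (dropF X Wb i).isSome then iInp else iNop
  | .r _ => iNop
  | .var v => if Wb v then iInp else iNop

lemma regionA {X : Fin m → Fin 3 → V} {Wb : V → Bool} {qb : Bool} {τ : Set Interaction}
    (hnop : iNop ∈ τ) (hinp : iInp ∈ τ)
    (huniq : ∀ i (a b : Fin 3), Wb (X i a) → Wb (X i b) → a = b)
    (hq : qb = false → ∀ i, (dropF X Wb i).isSome) :
    IsRegion (Aphi X) τ (supA X Wb qb) (sigA X Wb qb) := by
  constructor
  · intro e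
    cases e <;> simp only [sigA] <;> (try split) <;> first | exact hnop | exact hinp
  · intro s e s' hd
    cases s <;> cases e <;> simp only [Aphi] at hd <;>
      (try (cases hd; done))
    case s0.k => cases hd; simp [supA, sigA, iInp]
    case s0.h =>
      cases hd; cases qb <;> simp [supA, sigA, iInp, iNop]
    case s0.r i =>
      cases hd
      simp [supA, sigA, iNop, (pat_k (dropF X Wb i)).1]
    case s1.r i =>
      cases hd
      simp [supA, sigA, iNop, (pat_k (dropF X Wb i)).2]
    case q.hc i =>
      cases hd
      simp only [supA, sigA]
      cases hqb : qb
      · have hs := hq hqb i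
        obtain ⟨p, hp⟩ := Option.isSome_iff_exists.mp hs
        simp [hp, pat_t5, iNop]
      · rcases hdi : dropF X Wb i with _ | p
        · simp [hdi, iNop, pat]
        · simp [hdi, pat_t5, iInp]
    case t.k i j =>
      rcases hj : (j = 0 : Prop) with _
      by_cases hj : j = 0
      · rw [if_pos hj] at hd
        cases hd
        subst hj
        simp [supA, sigA, (pat_k (dropF X Wb i)).1, (pat_k (dropF X Wb i)).2, iInp]
      · rw [if_neg hj] at hd
        cases hd
    case t.var i j v =>
      obtain ⟨p, j', rfl, rfl, hedge⟩ := gadget_cases hd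
      simp only [supA, sigA]
      by_cases hw : Wb (X i p)
      · have hdrop : dropF X Wb i = some p := dropF_eq (huniq i) hw
        rw [hdrop, if_pos hw]
        rw [(edge_inp p j j' hedge).1, (edge_inp p j j' hedge).2]
        rfl
      · rw [if_neg hw]
        have hne : dropF X Wb i ≠ some p := fun h => hw (dropF_some h)
        rw [edge_nop _ p j j' hedge hne]
        rfl

def supB (C : Fin m → Bool) (qb : Bool) : PState m → Bool
  | .s0 => true
  | .s1 => true
  | .q => qb
  | .t i _ => !C i

def sigB (X : Fin m → Fin 3 → V) (C : Fin m → Bool) (qb : Bool) : PEvent m V → Interaction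
  | .k => iNop
  | .h => if qb then iNop else iInp
  | .hc i => if C i then (if qb then iInp else iFree) else iNop
  | .r i => if C i then iInp else iNop
  | .var v => if ∀ i p, X i p = v → C i = true then iFree else iNop

lemma regionB {X : Fin m → Fin 3 → V} {C : Fin m → Bool} {qb : Bool} {τ : Set Interaction}
    (hnop : iNop ∈ τ) (hinp : iInp ∈ τ) (hfree : iFree ∈ τ)
    (hq : qb = false → ∀ i, C i = true) :
    IsRegion (Aphi X) τ (supB C qb) (sigB X C qb) := by
  constructor
  · intro e
    cases e <;> simp only [sigB] <;> (try split) <;> (try split) <;>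
      first | exact hnop | exact hinp | exact hfree
  · intro s e s' hd
    cases s <;> cases e <;> simp only [Aphi] at hd <;>
      (try (cases hd; done))
    case s0.k => cases hd; simp [supB, sigB, iNop]
    case s0.h => cases hd; cases qb <;> simp [supB, sigB, iInp, iNop]
    case s0.r i =>
      cases hd; cases hc : C i <;> simp [supB, sigB, hc, iInp, iNop]
    case s1.r i =>
      cases hd; cases hc : C i <;> simp [supB, sigB, hc, iInp, iNop]
    case q.hc i =>
      cases hd
      cases hqb : qb
      · have := hq hqb i
        simp [supB, sigB, this, iFree]
      · cases hc : C i <;> simp [supB, sigB, hc, iInp, iNop]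
    case t.k i j =>
      by_cases hj : j = 0
      · rw [if_pos hj] at hd; cases hd; simp [supB, sigB, iNop]
      · rw [if_neg hj] at hd; cases hd
    case t.var i j v =>
      obtain ⟨p, j', rfl, rfl, hedge⟩ := gadget_cases hd
      simp only [supB, sigB]
      by_cases hall : ∀ i' p', X i' p' = X i p → C i' = true
      · have hci : C i = true := hall i p rfl
        rw [if_pos hall, hci]
        simp [iFree]
      · rw [if_neg hall]
        rfl


lemma inp_some {x y : Bool} (h : iInp x = some y) : x = true ∧ y = false := by
  cases x <;> simp [iInp] at h <;> simp [h]

lemma mem4 {τ : Set Interaction}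
    (hτ : τ = {iNop, iInp, iFree} ∨ τ = {iNop, iInp, iUsed, iFree})
    {f : Interaction} (hf : f ∈ τ) :
    f = iNop ∨ f = iInp ∨ f = iUsed ∨ f = iFree := by
  rcases hτ with rfl | rfl <;> simp only [Set.mem_insert_iff, Set.mem_singleton_iff] at hf <;>
    tauto

lemma dropIff {f : Interaction}
    (h4 : f = iNop ∨ f = iInp ∨ f = iUsed ∨ f = iFree)
    {x y : Bool} (hxy : f x = some y) :
    f = iInp ↔ (x = true ∧ y = false) := by
  have hni : iNop ≠ iInp := fun h => by have := congrFun h false; simp [iNop, iInp] at this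
  have hui : iUsed ≠ iInp := fun h => by have := congrFun h true; simp [iUsed, iInp] at this
  have hfi : iFree ≠ iInp := fun h => by have := congrFun h true; simp [iFree, iInp] at this
  rcases h4 with rfl | rfl | rfl | rfl <;> cases x <;>
    simp_all [iNop, iInp, iUsed, iFree]

lemma noRise {f : Interaction}
    (h4 : f = iNop ∨ f = iInp ∨ f = iUsed ∨ f = iFree)
    {y : Bool} (hxy : f false = some y) : y = false := by
  rcases h4 with rfl | rfl | rfl | rfl <;> simp_all [iNop, iInp, iUsed, iFree]


lemma extract_model {τ : Set Interaction}
    (hτ : τ = {iNop, iInp, iFree} ∨ τ = {iNop, iInp, iUsed, iFree})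
    {X : Fin m → Fin 3 → V} {sup0 : PState m → Bool} {sig0 : PEvent m V → Interaction}
    (hreg : IsRegion (Aphi X) τ sup0 sig0)
    (hk0 : sig0 PEvent.k (sup0 PState.q) = none) :
    ∀ i, ∃ p : Fin 3, sig0 (PEvent.var (X i p)) = iInp ∧
      ∀ p', sig0 (PEvent.var (X i p')) = iInp → p' = p := by
  obtain ⟨hmem0, htr0⟩ := hreg
  have h4 : ∀ e, sig0 e = iNop ∨ sig0 e = iInp ∨ sig0 e = iUsed ∨ sig0 e = iFree :=
    fun e => mem4 hτ (hmem0 e)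
  have hks : sig0 PEvent.k (sup0 PState.s0) = some (sup0 PState.s1) := htr0 _ _ _ rfl
  have hkt : ∀ i, sig0 PEvent.k (sup0 (PState.t i 0)) = some (sup0 (PState.t i 8)) :=
    fun i => htr0 _ _ _ (by simp [Aphi])
  have hh : sig0 PEvent.h (sup0 PState.s0) = some (sup0 PState.q) := htr0 _ _ _ rfl
  have hhc : ∀ i, sig0 (PEvent.hc i) (sup0 PState.q) = some (sup0 (PState.t i 5)) :=
    fun i => htr0 _ _ _ rfl
  -- sig0 k is iInp or iUsed, and sup0 q = false
  have hkq : sup0 PState.q = false := by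
    rcases h4 PEvent.k with hk | hk | hk | hk <;> rw [hk] at hk0
    · simp [iNop] at hk0
    · cases hq : sup0 PState.q
      · rfl
      · rw [hq] at hk0; simp [iInp] at hk0
    · cases hq : sup0 PState.q
      · rfl
      · rw [hq] at hk0; simp [iUsed] at hk0
    · exfalso
      rw [hk] at hks
      have hs0 : sup0 PState.s0 = false := by
        cases hs : sup0 PState.s0
        · rfl
        · rw [hs] at hks; simp [iFree] at hks
      have hq : sup0 PState.q = true := by
        cases hq : sup0 PState.q
        · rw [hq] at hk0; simp [iFree] at hk0
        · rfl
      rw [hs0, hq] at hh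
      rcases h4 PEvent.h with hhh | hhh | hhh | hhh <;> rw [hhh] at hh <;>
        simp [iNop, iInp, iUsed, iFree] at hh
  have ht0 : ∀ i, sup0 (PState.t i 0) = true := by
    intro i
    rcases h4 PEvent.k with hk | hk | hk | hk <;> rw [hk] at hk0 hkt
    · simp [iNop] at hk0
    · exact (inp_some (hkt i)).1
    · have := hkt i
      cases hti : sup0 (PState.t i 0)
      · rw [hti] at this; simp [iUsed] at this
      · rfl
    · rw [hkq] at hk0; simp [iFree] at hk0
  have ht5 : ∀ i, sup0 (PState.t i 5) = false := by
    intro i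
    have := hhc i
    rw [hkq] at this
    rcases h4 (PEvent.hc i) with hc | hc | hc | hc <;> rw [hc] at this <;>
      simp [iNop, iInp, iUsed, iFree] at this
    · first | exact this | exact this.symm
    · first | exact this | exact this.symm
  intro i
  have E0 : sig0 (PEvent.var (X i 0)) true = some (sup0 (PState.t i 1)) := by
    have := htr0 (PState.t i 0) (PEvent.var (X i 0)) (PState.t i 1) (by simp [Aphi, gadget])
    rwa [ht0 i] at this
  have E1 : sig0 (PEvent.var (X i 1)) (sup0 (PState.t i 1)) = some (sup0 (PState.t i 2)) :=
    htr0 _ _ _ (by simp [Aphi, gadget])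
  have E2 : sig0 (PEvent.var (X i 2)) (sup0 (PState.t i 2)) = some (sup0 (PState.t i 5)) :=
    htr0 _ _ _ (by simp [Aphi, gadget])
  have h3 : ∀ z : Fin 3, z = 0 ∨ z = 1 ∨ z = 2 := by decide
  cases hb1 : sup0 (PState.t i 1)
  · -- drop at position 0
    refine ⟨0, (dropIff (h4 _) E0).mpr ⟨rfl, hb1⟩, ?_⟩
    have hb2 : sup0 (PState.t i 2) = false := by
      rw [hb1] at E1; exact noRise (h4 _) E1
    intro p' hp'
    rcases h3 p' with rfl | rfl | rfl
    · rfl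
    · rw [hp', hb1] at E1; simp [iInp] at E1
    · rw [hp', hb2] at E2; simp [iInp] at E2
  · cases hb2 : sup0 (PState.t i 2)
    · -- drop at position 1
      refine ⟨1, (dropIff (h4 _) E1).mpr ⟨hb1, hb2⟩, ?_⟩
      intro p' hp'
      rcases h3 p' with rfl | rfl | rfl
      · rw [hp'] at E0
        have := (inp_some E0).2
        rw [this] at hb1; exact absurd hb1 (by simp)
      · rfl
      · rw [hp', hb2] at E2; simp [iInp] at E2
    · -- drop at position 2
      refine ⟨2, (dropIff (h4 _) E2).mpr ⟨hb2, ht5 i⟩, ?_⟩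
      intro p' hp'
      rcases h3 p' with rfl | rfl | rfl
      · rw [hp'] at E0
        have := (inp_some E0).2
        rw [this] at hb1; exact absurd hb1 (by simp)
      · rw [hp', hb1] at E1
        have := (inp_some E1).2
        rw [this] at hb2; exact absurd hb2 (by simp)
      · rfl

end KeyHelper

open KeyHelper in
/-- if k is τ-inhibitable at q in A_φ then A_φ has the τ-ESSP and
the τ-SSP, for τ = {nop, inp, free} or τ = {nop, inp, used, free}. -/
theorem key_inhibitable_implies_essp_ssp {m : ℕ} {V : Type} [DecidableEq V] [Fintype V]
    (X : Fin m → Fin 3 → V) (hcubic : CubicMonotone X)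
    (τ : Set Interaction)
    (hτ : τ = {iNop, iInp, iFree} ∨ τ = {iNop, iInp, iUsed, iFree})
    (hkey : Inhibitable (Aphi X) τ PEvent.k PState.q) :
    ESSP (Aphi X) τ ∧ SSP (Aphi X) τ := by
  have hinj := hcubic.1
  have hnop : iNop ∈ τ := by rcases hτ with rfl | rfl <;> simp
  have hinp : iInp ∈ τ := by rcases hτ with rfl | rfl <;> simp
  have hfree : iFree ∈ τ := by rcases hτ with rfl | rfl <;> simp
  obtain ⟨sup0, sig0, hreg0, hk0⟩ := hkey
  have hclause := extract_model hτ hreg0 hk0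
  set Mb : V → Bool := fun v => decide (sig0 (PEvent.var v) = iInp) with hMb
  have hMuniq : ∀ (i : Fin m) (a b : Fin 3), Mb (X i a) → Mb (X i b) → a = b := by
    intro i a b ha hb
    obtain ⟨p, hp, hu⟩ := hclause i
    rw [hu a (of_decide_eq_true ha), hu b (of_decide_eq_true hb)]
  have hMex : ∀ i, ∃ p, Mb (X i p) = true := by
    intro i
    obtain ⟨p, hp, _⟩ := hclause i
    exact ⟨p, decide_eq_true hp⟩
  -- the regions
  have hK : IsRegion (Aphi X) τ (supA X Mb false) (sigA X Mb false) :=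
    regionA hnop hinp hMuniq (fun _ i => dropF_isSome (hMex i))
  have hK1 : IsRegion (Aphi X) τ (supA X (fun _ => false) true) (sigA X (fun _ => false) true) :=
    regionA hnop hinp (fun _ a b ha _ => absurd ha (by simp)) (fun h => Bool.noConfusion h)
  have hKp : ∀ (i : Fin m) (p : Fin 3),
      IsRegion (Aphi X) τ (supA X (fun w => decide (w = X i p)) true)
        (sigA X (fun w => decide (w = X i p)) true) := by
    intro i p
    exact regionA hnop hinp
      (fun i' a b ha hb =>
        hinj i' ((of_decide_eq_true ha).trans (of_decide_eq_true hb).symm))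
      (fun h => Bool.noConfusion h)
  have hdr : ∀ (i : Fin m) (p : Fin 3), dropF X (fun w => decide (w = X i p)) i = some p := by
    intro i p
    exact dropF_eq
      (fun a b ha hb => hinj i ((of_decide_eq_true ha).trans (of_decide_eq_true hb).symm))
      (decide_eq_true rfl)
  have hdrn : ∀ i : Fin m, dropF X (fun _ : V => false) i = none := fun i => rfl
  have hH : IsRegion (Aphi X) τ (supB (fun _ => true) false) (sigB X (fun _ => true) false) :=
    regionB hnop hinp hfree (fun _ _ => rfl)
  have hF : IsRegion (Aphi X) τ (supB (fun _ => true) true) (sigB X (fun _ => true) true) :=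
    regionB hnop hinp hfree (fun h => Bool.noConfusion h)
  have hGv : ∀ v : V, IsRegion (Aphi X)  τ
      (supB (fun i' => decide (∃ p, v = X i' p)) true)
      (sigB X (fun i' => decide (∃ p, v = X i' p)) true) :=
    fun v => regionB hnop hinp hfree (fun h => Bool.noConfusion h)
  have hSi : ∀ i0 : Fin m, IsRegion (Aphi X) τ
      (supB (fun i' => decide (i' = i0)) true)
      (sigB X (fun i' => decide (i' = i0)) true) :=
    fun i0 => regionB hnop hinp hfree (fun h => Bool.noConfusion h)
  constructor
  · -- ESSP
    intro s e hd
    cases s <;> cases e <;> (try (cases hd; done))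
    case s0.hc i => exact ⟨_, _, hH, by simp [supB, sigB, iFree]⟩
    case s0.var v => exact ⟨_, _, hF, by simp [supB, sigB, iFree]⟩
    case s1.k => exact ⟨_, _, hK1, by simp [supA, sigA, iInp]⟩
    case s1.h => exact ⟨_, _, hK, by simp [supA, sigA, iInp]⟩
    case s1.hc i => exact ⟨_, _, hH, by simp [supB, sigB, iFree]⟩
    case s1.var v => exact ⟨_, _, hF, by simp [supB, sigB, iFree]⟩
    case q.k => exact ⟨_, _, hK, by simp [supA, sigA, iInp]⟩
    case q.h => exact ⟨_, _, hK, by simp [supA, sigA, iInp]⟩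
    case q.r i => exact ⟨_, _, hH, by simp [supB, sigB, iInp]⟩
    case q.var v => exact ⟨_, _, hF, by simp [supB, sigB, iFree]⟩
    case t.k i j =>
      have hj : ¬(j = 0) := by
        intro h
        rw [h] at hd
        simp [Aphi] at hd
      obtain ⟨p, hp⟩ := exists_pat_false j hj
      exact ⟨_, _, hKp i p, by simp [supA, sigA, hdr i p, hp, iInp]⟩
    case t.h i j => exact ⟨_, _, hH, by simp [supB, sigB, iInp]⟩
    case t.hc i j i' => exact ⟨_, _, hF, by simp [supB, sigB, iInp]⟩
    case t.r i j i' => exact ⟨_, _, hH, by simp [supB, sigB, iInp]⟩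
    case t.var i j v =>
      have hd' : gadget X i j v = none := hd
      by_cases hv : ∃ p, v = X i p
      · obtain ⟨p, rfl⟩ := hv
        have hp : pat (some p) j = false := by
          cases hpv : pat (some p) j
          · rfl
          · exact absurd hd' (gadget_isSome (hinj i) hpv)
        exact ⟨_, _, hKp i p, by simp [supA, sigA, hdr i p, hp, iInp]⟩
      · refine ⟨_, _, hGv v, ?_⟩
        have hall : ∀ i' p', X i' p' = v →
            (fun i'' => decide (∃ p, v = X i'' p)) i' = true :=
          fun i' p' he => decide_eq_true ⟨p', he.symm⟩
        simp only [sigB, supB, if_pos hall]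
        simp [iFree, hv]
  · -- SSP
    intro s s' hne
    have symm : ∀ {a b : PState m}, Separable (Aphi X) τ a b → Separable (Aphi X) τ b a :=
      fun ⟨u, g, hr, hx⟩ => ⟨u, g, hr, hx.symm⟩
    cases s <;> cases s' <;> (try exact absurd rfl hne)
    case s0.s1 => exact ⟨_, _, hK1, by simp [supA]⟩
    case s1.s0 => exact symm ⟨_, _, hK1, by simp [supA]⟩
    case s0.q => exact ⟨_, _, hH, by simp [supB]⟩
    case q.s0 => exact symm ⟨_, _, hH, by simp [supB]⟩
    case s1.q => exact ⟨_, _, hH, by simp [supB]⟩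
    case q.s1 => exact symm ⟨_, _, hH, by simp [supB]⟩
    case s0.t i j => exact ⟨_, _, hF, by simp [supB]⟩
    case t.s0 i j => exact symm ⟨_, _, hF, by simp [supB]⟩
    case s1.t i j => exact ⟨_, _, hF, by simp [supB]⟩
    case t.s1 i j => exact symm ⟨_, _, hF, by simp [supB]⟩
    case q.t i j => exact ⟨_, _, hF, by simp [supB]⟩
    case t.q i j => exact symm ⟨_, _, hF, by simp [supB]⟩
    case t.t i j i' j' =>
      by_cases hii : i = i'
      · subst hii
        have hjj : j ≠ j' := fun h => hne (by rw [h])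
        rcases pat_sep j j' hjj with hp | hp | hp | hp
        · exact ⟨_, _, hKp i 0, by simp only [supA, hdr i 0]; exact hp⟩
        · exact ⟨_, _, hKp i 1, by simp only [supA, hdr i 1]; exact hp⟩
        · exact ⟨_, _, hKp i 2, by simp only [supA, hdr i 2]; exact hp⟩
        · exact ⟨_, _, hK1, by simp only [supA, hdrn i]; exact hp⟩
      · refine ⟨_, _, hSi i, ?_⟩
        have hii' : i' ≠ i := Ne.symm hii
        simp [supB, hii']
end

section
/- Let τ = {nop, inp, free} or τ = {nop, inp, used, free}, and let φ be a cubic monotone 3-CNF with m clauses. The TS A_φ is τ-feasible if and only if φ has a one-in-three model. -/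
section Aux

def consumed : Fin 9 → Fin 3 → Bool :=
  ![![false,false,false], ![true,false,false], ![true,true,false],
    ![false,false,true], ![true,false,true], ![true,true,true],
    ![false,true,true], ![false,true,false], ![true,true,true]]

def EdgeT : List (Fin 9 × Fin 3 × Fin 9) :=
  [(0,0,1),(0,1,7),(0,2,3),(1,1,2),(1,2,4),(2,2,5),(3,0,4),(3,1,6),(4,1,5),(6,0,5),(7,0,2),(7,2,6)]

def Edge (j : Fin 9) (a : Fin 3) (j' : Fin 9) : Prop := (j,a,j') ∈ EdgeT

instance (j : Fin 9) (a : Fin 3) (j' : Fin 9) : Decidable (Edge j a j') := by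
  unfold Edge; infer_instance

lemma edge_facts : ∀ j a j', Edge j a j' →
    consumed j a = false ∧ consumed j' a = true ∧ j ≠ 8 ∧ j' ≠ 8 ∧
    ∀ b, b ≠ a → consumed j' b = consumed j b := by decide

lemma exists_consumed : ∀ j : Fin 9, j ≠ 0 → ∃ a, consumed j a = true := by decide

lemma consumed_sep : ∀ j j' : Fin 9, j ≠ 8 → j' ≠ 8 → j ≠ j' →
    ∃ a, consumed j a ≠ consumed j' a := by decide

end Aux

lemma gadget_some {m : ℕ} {V : Type} [DecidableEq V] (X : Fin m → Fin 3 → V)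
    (i : Fin m) (j : Fin 9) (v : V) (s' : PState m)
    (h : gadget X i j v = some s') :
    ∃ a j', Edge j a j' ∧ v = X i a ∧ s' = PState.t i j' := by
  unfold gadget at h
  split_ifs at h
  all_goals (try (exfalso; exact Option.noConfusion h))
  all_goals subst_vars
  all_goals obtain rfl := Option.some.inj h
  all_goals first
    | exact ⟨0,1, by decide, rfl, rfl⟩
    | exact ⟨1,7, by decide, rfl, rfl⟩
    | exact ⟨2,3, by decide, rfl, rfl⟩
    | exact ⟨1,2, by decide, rfl, rfl⟩
    | exact ⟨2,4, by decide, rfl, rfl⟩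
    | exact ⟨2,5, by decide, rfl, rfl⟩
    | exact ⟨0,4, by decide, rfl, rfl⟩
    | exact ⟨1,6, by decide, rfl, rfl⟩
    | exact ⟨1,5, by decide, rfl, rfl⟩
    | exact ⟨0,5, by decide, rfl, rfl⟩
    | exact ⟨0,2, by decide, rfl, rfl⟩
    | exact ⟨2,6, by decide, rfl, rfl⟩
lemma delta_cases {m : ℕ} {V : Type} [DecidableEq V] (X : Fin m → Fin 3 → V)
    (P : PState m → PEvent m V → PState m → Prop)
    (h1 : P .s0 .k .s1) (h2 : P .s0 .h .q)
    (h3 : ∀ i, P .s0 (.r i) (.t i 0)) (h4 : ∀ i, P .s1 (.r i) (.t i 8))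
    (h5 : ∀ i, P .q (.hc i) (.t i 5)) (h6 : ∀ i, P (.t i 0) .k (.t i 8))
    (h7 : ∀ i j a j', Edge j a j' → P (.t i j) (.var (X i a)) (.t i j')) :
    ∀ s e s', (Aphi X).delta s e = some s' → P s e s' := by
  intro s e s' h
  cases s <;> cases e <;>
    simp only [Aphi] at h <;>
    try (simp at h; done)
  · exact (Option.some.inj h) ▸ h1
  · exact (Option.some.inj h) ▸ h2
  · exact (Option.some.inj h) ▸ h3 _
  · exact (Option.some.inj h) ▸ h4 _
  · exact (Option.some.inj h) ▸ h5 _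
  · next i j =>
      split at h
      · next hj => subst hj; exact (Option.some.inj h) ▸ h6 i
      · exact nomatch h
  · next i j v =>
      obtain ⟨a, j', he, rfl, rfl⟩ := gadget_some X i j v s' h
      exact h7 i j a j' he
section Regions

variable {m : ℕ} {V : Type} [DecidableEq V] (X : Fin m → Fin 3 → V)
variable {τ : Set Interaction}

/-- Region A : sup 1 on s0,s1. -/
def supA : PState m → Bool
  | .s0 => true | .s1 => true | _ => false

def sigA : PEvent m V → Interaction
  | .k => iNop | .h => iInp | .r _ => iInp | .hc _ => iFree | .var _ => iFree

lemma regA (hN : iNop ∈ τ) (hI : iInp ∈ τ) (hF : iFree ∈ τ) :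
    IsRegion (Aphi X) τ (supA) (sigA) := by
  constructor
  · intro e; cases e <;> simp only [sigA] <;> assumption
  · exact delta_cases X _ rfl rfl (fun i => rfl) (fun i => rfl) (fun i => rfl)
      (fun i => rfl) (fun i j a j' _ => rfl)

/-- Region B : sup 1 on s0,s1,q. -/
def supB : PState m → Bool
  | .s0 => true | .s1 => true | .q => true | _ => false

def sigB : PEvent m V → Interaction
  | .k => iNop | .h => iNop | .r _ => iInp | .hc _ => iInp | .var _ => iFree

lemma regB (hN : iNop ∈ τ) (hI : iInp ∈ τ) (hF : iFree ∈ τ) :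
    IsRegion (Aphi X) τ (supB) (sigB) := by
  constructor
  · intro e; cases e <;> simp only [sigB] <;> assumption
  · exact delta_cases X _ rfl rfl (fun i => rfl) (fun i => rfl) (fun i => rfl)
      (fun i => rfl) (fun i j a j' _ => rfl)

/-- Region P i0 : sup 0 exactly on clause i0's gadget states. -/
def supP (i0 : Fin m) : PState m → Bool
  | .t i _ => decide (i ≠ i0) | _ => true

def sigP (i0 : Fin m) : PEvent m V → Interaction
  | .k => iNop | .h => iNop
  | .r i => if i = i0 then iInp else iNop
  | .hc i => if i = i0 then iInp else iNop
  | .var _ => iNop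

lemma regP (hN : iNop ∈ τ) (hI : iInp ∈ τ) (i0 : Fin m) :
    IsRegion (Aphi X) τ (supP i0) (sigP i0) := by
  constructor
  · intro e; cases e <;> simp only [sigP] <;> try assumption
    all_goals split_ifs <;> assumption
  · apply delta_cases X
      (fun s e s' => sigP i0 e (supP i0 s) = some (supP i0 s')) rfl rfl
      ?_ ?_ ?_ ?_ (fun i j a j' _ => rfl)
    · intro i; by_cases hi : i = i0 <;> simp [sigP, supP, hi, iNop, iInp]
    · intro i; by_cases hi : i = i0 <;> simp [sigP, supP, hi, iNop, iInp]
    · intro i; by_cases hi : i = i0 <;> simp [sigP, supP, hi, iNop, iInp]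
    · intro i; by_cases hi : i = i0 <;> simp [sigP, supP, hi, iNop, iInp]

/-- Region Q : sup 0 on s1 and all t8. -/
def supQ : PState m → Bool
  | .s1 => false | .t _ j => decide (j ≠ 8) | _ => true

def sigQ : PEvent m V → Interaction
  | .k => iInp | _ => iNop

lemma regQ (hN : iNop ∈ τ) (hI : iInp ∈ τ) :
    IsRegion (Aphi X) τ (supQ) (sigQ) := by
  constructor
  · intro e; cases e <;> simp only [sigQ] <;> assumption
  · apply delta_cases X
      (fun s e s' => sigQ e (supQ s) = some (supQ s')) rfl rfl
      (fun i => rfl) (fun i => rfl) (fun i => rfl) (fun i => rfl)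
    intro i j a j' he
    obtain ⟨-, -, hj8, hj'8, -⟩ := edge_facts j a j' he
    simp [sigQ, supQ, hj8, hj'8, iNop]

end Regions
section Regions2

variable {m : ℕ} {V : Type} [DecidableEq V] (X : Fin m → Fin 3 → V)
variable {τ : Set Interaction}

lemma consumed_zero : ∀ b, consumed 0 b = false := by decide
lemma consumed_five : ∀ b, consumed 5 b = true := by decide
lemma consumed_eight : ∀ b, consumed 8 b = true := by decide

/-- Region H v : sup 0 exactly on gadget states of clauses containing v. -/
def supH (v : V) : PState m → Bool
  | .t i _ => decide (¬ ∃ b, X i b = v) | _ => true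

def sigH (v : V) : PEvent m V → Interaction
  | .k => iNop | .h => iNop
  | .r i => if ∃ b, X i b = v then iInp else iNop
  | .hc i => if ∃ b, X i b = v then iInp else iNop
  | .var u => if u = v then iFree else iNop

lemma regH (hN : iNop ∈ τ) (hI : iInp ∈ τ) (hF : iFree ∈ τ) (v : V) :
    IsRegion (Aphi X) τ (supH X v) (sigH X v) := by
  constructor
  · intro e; cases e <;> simp only [sigH] <;> try assumption
    all_goals split_ifs <;> assumption
  · apply delta_cases X
      (fun s e s' => sigH X v e (supH X v s) = some (supH X v s')) rfl rfl
      ?_ ?_ ?_ ?_ ?_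
    · intro i; by_cases hi : ∃ b, X i b = v <;> simp [sigH, supH, hi, iNop, iInp]
    · intro i; by_cases hi : ∃ b, X i b = v <;> simp [sigH, supH, hi, iNop, iInp]
    · intro i; by_cases hi : ∃ b, X i b = v <;> simp [sigH, supH, hi, iNop, iInp]
    · intro i; by_cases hi : ∃ b, X i b = v <;> simp [sigH, supH, hi, iNop, iInp]
    · intro i j a j' he
      by_cases hv : X i a = v
      · have hi : ∃ b, X i b = v := ⟨a, hv⟩
        simp [sigH, supH, hv, hi, iFree]
      · by_cases hi : ∃ b, X i b = v <;> simp [sigH, supH, hv, hi, iNop, iFree]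

/-- Region F w : drop pattern for w in clauses containing w. -/
def supF (w : V) : PState m → Bool
  | .s0 => true | .s1 => false | .q => true
  | .t i j => !(decide (j = (8 : Fin 9) ∨ ∃ b, X i b = w ∧ consumed j b = true))

def sigF (w : V) : PEvent m V → Interaction
  | .k => iInp | .h => iNop | .r _ => iNop
  | .hc i => if ∃ b, X i b = w then iInp else iNop
  | .var u => if u = w then iInp else iNop

lemma supF_t (w : V) (i : Fin m) (j : Fin 9) :
    supF X w (.t i j) = false ↔ (j = 8 ∨ ∃ b, X i b = w ∧ consumed j b = true) := by
  simp [supF]; tauto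

lemma regF (hinj : ∀ i, Function.Injective (X i))
    (hN : iNop ∈ τ) (hI : iInp ∈ τ) (w : V) :
    IsRegion (Aphi X) τ (supF X w) (sigF X w) := by
  constructor
  · intro e; cases e <;> simp only [sigF] <;> try assumption
    all_goals split_ifs <;> assumption
  · apply delta_cases X
      (fun s e s' => sigF X w e (supF X w s) = some (supF X w s')) rfl rfl
      ?_ ?_ ?_ ?_ ?_
    · intro i; simp [sigF, supF, iNop, consumed_zero]
    · intro i; simp [sigF, supF, iNop]
    · intro i
      by_cases hi : ∃ b, X i b = w
      · have h5 : supF X w (.t i 5) = false :=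
          (supF_t X w i 5).2 (Or.inr ⟨hi.choose, hi.choose_spec, consumed_five _⟩)
        rw [h5]
        show sigF X w (.hc i) true = some false
        simp [sigF, hi, iInp]
      · have h5 : supF X w (.t i 5) = true := by
          simp [supF]
          intro x hx
          exact absurd ⟨x, hx⟩ hi
        rw [h5]
        show sigF X w (.hc i) true = some true
        simp [sigF, hi, iNop]
    · intro i; simp [sigF, supF, iInp, consumed_zero]
    · intro i j a j' he
      obtain ⟨hja, hj'a, hj8, hj'8, hrest⟩ := edge_facts j a j' he
      by_cases hw : X i a = w
      · have h1 : ¬(j = (8:Fin 9) ∨ ∃ b, X i b = w ∧ consumed j b = true) := by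
          rintro (h8 | ⟨b, hb, hcb⟩)
          · exact hj8 h8
          · have hba : b = a := hinj i (hb.trans hw.symm)
            rw [hba, hja] at hcb; exact Bool.noConfusion hcb
        have h2 : (j' = (8:Fin 9) ∨ ∃ b, X i b = w ∧ consumed j' b = true) :=
          Or.inr ⟨a, hw, hj'a⟩
        simp [sigF, supF, hw, h1, h2, iInp]
      · have hiff : (j = (8:Fin 9) ∨ ∃ b, X i b = w ∧ consumed j b = true) ↔
            (j' = (8:Fin 9) ∨ ∃ b, X i b = w ∧ consumed j' b = true) := by
          constructor
          · rintro (h8 | ⟨b, hb, hcb⟩)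
            · exact absurd h8 hj8
            · refine Or.inr ⟨b, hb, ?_⟩
              have hba : b ≠ a := fun hba => hw (hba ▸ hb)
              rw [hrest b hba]; exact hcb
          · rintro (h8 | ⟨b, hb, hcb⟩)
            · exact absurd h8 hj'8
            · refine Or.inr ⟨b, hb, ?_⟩
              have hba : b ≠ a := fun hba => hw (hba ▸ hb)
              rw [← hrest b hba]; exact hcb
        simp only [sigF, supF, if_neg hw, hiff]
        exact rfl

end Regions2
section Regions3

variable {m : ℕ} {V : Type} [DecidableEq V] (X : Fin m → Fin 3 → V)
variable {τ : Set Interaction}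

open Classical in
/-- Region C : model-based drop pattern. -/
noncomputable def supC (M : Set V) : PState m → Bool
  | .s0 => true | .s1 => false | .q => false
  | .t i j => !(decide (j = (8 : Fin 9) ∨ ∃ b, X i b ∈ M ∧ consumed j b = true))

open Classical in
noncomputable def sigC (M : Set V) : PEvent m V → Interaction
  | .k => iInp | .h => iInp | .r _ => iNop | .hc _ => iFree
  | .var u => if u ∈ M then iInp else iNop

lemma supC_t (M : Set V) (i : Fin m) (j : Fin 9) :
    supC X M (.t i j) = false ↔ (j = 8 ∨ ∃ b, X i b ∈ M ∧ consumed j b = true) := by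
  simp [supC]

lemma regC (hN : iNop ∈ τ) (hI : iInp ∈ τ) (hF : iFree ∈ τ)
    (M : Set V) (hM : OneInThree X M) :
    IsRegion (Aphi X) τ (supC X M) (sigC M) := by
  constructor
  · intro e; cases e <;> simp only [sigC] <;> try assumption
    all_goals split_ifs <;> assumption
  · apply delta_cases X
      (fun s e s' => sigC M e (supC X M s) = some (supC X M s')) rfl rfl
      ?_ ?_ ?_ ?_ ?_
    · intro i
      have h0 : supC X M (.t i 0) = true := by
        simp [supC, consumed_zero]
      rw [h0]; exact rfl
    · intro i
      have h8 : supC X M (.t i 8) = false := (supC_t X M i 8).2 (Or.inl rfl)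
      rw [h8]; exact rfl
    · intro i
      obtain ⟨b, hb, -⟩ := hM i
      have h5 : supC X M (.t i 5) = false :=
        (supC_t X M i 5).2 (Or.inr ⟨b, hb, consumed_five b⟩)
      rw [h5]; exact rfl
    · intro i
      have h0 : supC X M (.t i 0) = true := by
        simp [supC, consumed_zero]
      have h8 : supC X M (.t i 8) = false := (supC_t X M i 8).2 (Or.inl rfl)
      rw [h0, h8]; exact rfl
    · intro i j a j' he
      obtain ⟨hja, hj'a, hj8, hj'8, hrest⟩ := edge_facts j a j' he
      obtain ⟨c, hc, huniq⟩ := hM i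
      by_cases hw : X i a ∈ M
      · have h1 : ¬(j = (8:Fin 9) ∨ ∃ b, X i b ∈ M ∧ consumed j b = true) := by
          rintro (h8 | ⟨b, hb, hcb⟩)
          · exact hj8 h8
          · have hba : b = a := (huniq b hb).trans (huniq a hw).symm
            rw [hba, hja] at hcb; exact Bool.noConfusion hcb
        have h2 : (j' = (8:Fin 9) ∨ ∃ b, X i b ∈ M ∧ consumed j' b = true) :=
          Or.inr ⟨a, hw, hj'a⟩
        simp [sigC, supC, hw, h1, h2, iInp]
      · have hiff : (j = (8:Fin 9) ∨ ∃ b, X i b ∈ M ∧ consumed j b = true) ↔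
            (j' = (8:Fin 9) ∨ ∃ b, X i b ∈ M ∧ consumed j' b = true) := by
          constructor
          · rintro (h8 | ⟨b, hb, hcb⟩)
            · exact absurd h8 hj8
            · refine Or.inr ⟨b, hb, ?_⟩
              have hba : b ≠ a := fun hba => hw (hba ▸ hb)
              rw [hrest b hba]; exact hcb
          · rintro (h8 | ⟨b, hb, hcb⟩)
            · exact absurd h8 hj'8
            · refine Or.inr ⟨b, hb, ?_⟩
              have hba : b ≠ a := fun hba => hw (hba ▸ hb)
              rw [← hrest b hba]; exact hcb
        have hsup : supC X M (.t i j) = supC X M (.t i j') := by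
          by_cases hj : j = (8:Fin 9) ∨ ∃ b, X i b ∈ M ∧ consumed j b = true
          · rw [(supC_t X M i j).2 hj, (supC_t X M i j').2 (hiff.1 hj)]
          · have h1 : supC X M (.t i j) = true := by
              cases h : supC X M (.t i j)
              · exact absurd ((supC_t X M i j).1 h) hj
              · rfl
            have h2 : supC X M (.t i j') = true := by
              cases h : supC X M (.t i j')
              · exact absurd (hiff.2 ((supC_t X M i j').1 h)) hj
              · rfl
            rw [h1, h2]
        rw [hsup]
        simp [sigC, hw, iNop]

end Regions3
section Backward

variable {m : ℕ} {V : Type} [DecidableEq V] (X : Fin m → Fin 3 → V)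
variable {τ : Set Interaction}

lemma gadget_complete (hinj : ∀ i, Function.Injective (X i)) (i : Fin m)
    (j : Fin 9) (b : Fin 3) (hj : j ≠ 8) (hcb : consumed j b = false) :
    gadget X i j (X i b) ≠ none := by
  fin_cases j <;> fin_cases b <;>
    first
    | exact absurd hcb (by decide)
    | exact absurd hj (by decide)
    | simp [gadget, (hinj i).eq_iff]

lemma supF_ne8 (hinj : ∀ i, Function.Injective (X i)) (i : Fin m) (a : Fin 3)
    (j : Fin 9) (h8 : j ≠ 8) : supF X (X i a) (.t i j) = !consumed j a := by
  by_cases hca : consumed j a = true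
  · rw [hca]
    exact (supF_t X (X i a) i j).2 (Or.inr ⟨a, rfl, hca⟩)
  · have hca' : consumed j a = false := by
      cases h : consumed j a
      · rfl
      · exact absurd h hca
    rw [hca']
    cases h : supF X (X i a) (.t i j)
    · rcases (supF_t X (X i a) i j).1 h with h8' | ⟨b, hb, hcb⟩
      · exact absurd h8' h8
      · have : b = a := hinj i hb
        rw [this, hca'] at hcb
        exact Bool.noConfusion hcb
    · rfl

lemma ssp_backward (hinj : ∀ i, Function.Injective (X i))
    (hN : iNop ∈ τ) (hI : iInp ∈ τ) (hF : iFree ∈ τ)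
    (M : Set V) (hM : OneInThree X M) : SSP (Aphi X) τ := by
  have symm : ∀ {a b : PState m}, Separable (Aphi X) τ a b →
      Separable (Aphi X) τ b a := by
    rintro a b ⟨sup, sig, hr, h⟩; exact ⟨sup, sig, hr, h.symm⟩
  have hs01 : Separable (Aphi X) τ .s0 .s1 :=
    ⟨_, _, regC X hN hI hF M hM, by simp [supC]⟩
  have hs0q : Separable (Aphi X) τ .s0 .q :=
    ⟨_, _, regA X hN hI hF, by simp [supA]⟩
  have hs1q : Separable (Aphi X) τ .s1 .q :=
    ⟨_, _, regA X hN hI hF, by simp [supA]⟩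
  have hs0t : ∀ i j, Separable (Aphi X) τ .s0 (.t i j) :=
    fun i j => ⟨_, _, regA X hN hI hF, by simp [supA]⟩
  have hs1t : ∀ i j, Separable (Aphi X) τ .s1 (.t i j) :=
    fun i j => ⟨_, _, regA X hN hI hF, by simp [supA]⟩
  have hqt : ∀ i j, Separable (Aphi X) τ .q (.t i j) :=
    fun i j => ⟨_, _, regB X hN hI hF, by simp [supB]⟩
  intro s s' hne
  cases s <;> cases s'
  case s0.s0 => exact absurd rfl hne
  case s0.s1 => exact hs01
  case s0.q => exact hs0q
  case s0.t i j => exact hs0t i j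
  case s1.s0 => exact symm hs01
  case s1.s1 => exact absurd rfl hne
  case s1.q => exact hs1q
  case s1.t i j => exact hs1t i j
  case q.s0 => exact symm hs0q
  case q.s1 => exact symm hs1q
  case q.q => exact absurd rfl hne
  case q.t i j => exact hqt i j
  case t.s0 i j => exact symm (hs0t i j)
  case t.s1 i j => exact symm (hs1t i j)
  case t.q i j => exact symm (hqt i j)
  case t.t i j i' j' =>
    by_cases hii : i = i'
    · subst hii
      have hjj : j ≠ j' := by
        rintro rfl; exact hne rfl
      by_cases hj8 : j = 8
      · subst hj8
        refine ⟨_, _, regQ X hN hI, ?_⟩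
        have h1 : supQ (m := m) (.t i 8) = false := by simp [supQ]
        have h2 : supQ (m := m) (.t i j') = true := by
          simp [supQ]; exact fun h => hjj h.symm
        rw [h1, h2]; exact Bool.noConfusion
      · by_cases hj'8 : j' = 8
        · subst hj'8
          refine ⟨_, _, regQ X hN hI, ?_⟩
          have h1 : supQ (m := m) (.t i j) = true := by simp [supQ, hj8]
          have h2 : supQ (m := m) (.t i 8) = false := by simp [supQ]
          rw [h1, h2]; exact Bool.noConfusion
        · obtain ⟨a, ha⟩ := consumed_sep j j' hj8 hj'8 hjj
          refine ⟨_, _, regF X hinj hN hI (X i a), ?_⟩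
          rw [supF_ne8 X hinj i a j hj8, supF_ne8 X hinj i a j' hj'8]
          intro h
          exact ha (Bool.not_inj h)
    · refine ⟨_, _, regP X hN hI i, ?_⟩
      have h1 : supP i (.t i j) = false := by simp [supP]
      have h2 : supP i (.t i' j') = true := by
        simp [supP]; exact fun h => hii h.symm
      rw [h1, h2]; exact Bool.noConfusion

lemma essp_backward (hinj : ∀ i, Function.Injective (X i))
    (hN : iNop ∈ τ) (hI : iInp ∈ τ) (hF : iFree ∈ τ)
    (M : Set V) (hM : OneInThree X M) : ESSP (Aphi X) τ := by
  intro s e hne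
  cases s <;> cases e
  case s0.k => exact absurd hne (by simp [Aphi])
  case s0.h => exact absurd hne (by simp [Aphi])
  case s0.r i => exact absurd hne (by simp [Aphi])
  case s0.hc i => exact ⟨_, _, regA X hN hI hF, rfl⟩
  case s0.var v => exact ⟨_, _, regA X hN hI hF, rfl⟩
  case s1.k => exact ⟨_, _, regC X hN hI hF M hM, rfl⟩
  case s1.h => exact ⟨_, _, regC X hN hI hF M hM, rfl⟩
  case s1.r i => exact absurd hne (by simp [Aphi])
  case s1.hc i => exact ⟨_, _, regA X hN hI hF, rfl⟩
  case s1.var v => exact ⟨_, _, regA X hN hI hF, rfl⟩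
  case q.k => exact ⟨_, _, regC X hN hI hF M hM, rfl⟩
  case q.h => exact ⟨_, _, regA X hN hI hF, rfl⟩
  case q.r i => exact ⟨_, _, regA X hN hI hF, rfl⟩
  case q.hc i => exact absurd hne (by simp [Aphi])
  case q.var v => exact ⟨_, _, regB X hN hI hF, rfl⟩
  case t.k i j =>
    have hj0 : j ≠ 0 := by
      rintro rfl
      exact absurd hne (by simp [Aphi])
    obtain ⟨a, ha⟩ := exists_consumed j hj0
    have hsub : supF X (X i a) (.t i j) = false :=
      (supF_t X (X i a) i j).2 (Or.inr ⟨a, rfl, ha⟩)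
    exact ⟨_, _, regF X hinj hN hI (X i a), by rw [hsub]; rfl⟩
  case t.h i j => exact ⟨_, _, regA X hN hI hF, rfl⟩
  case t.r i j i' => exact ⟨_, _, regA X hN hI hF, rfl⟩
  case t.hc i j i' => exact ⟨_, _, regB X hN hI hF, rfl⟩
  case t.var i j v =>
    have hg : gadget X i j v = none := hne
    by_cases hv : ∃ b, X i b = v
    · obtain ⟨b, hb⟩ := hv
      have hkey : j = 8 ∨ consumed j b = true := by
        by_cases h8 : j = 8
        · exact Or.inl h8
        · right
          by_contra hcb
          have hcb' : consumed j b = false := by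
            cases h : consumed j b
            · rfl
            · exact absurd h hcb
          exact gadget_complete X hinj i j b h8 hcb' (hb ▸ hg)
      have hsub : supF X v (.t i j) = false := by
        refine (supF_t X v i j).2 ?_
        rcases hkey with h8 | hc
        · exact Or.inl h8
        · exact Or.inr ⟨b, hb, hc⟩
      refine ⟨_, _, regF X hinj hN hI v, ?_⟩
      rw [hsub]
      simp [sigF, iInp]
    · refine ⟨_, _, regH X hN hI hF v, ?_⟩
      simp [sigH, supH, hv, iFree]

end Backward
section Forward

variable {m : ℕ} {V : Type} [DecidableEq V] (X : Fin m → Fin 3 → V)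
variable {τ : Set Interaction}

def GoodI (f : Interaction) : Prop :=
  f = iNop ∨ f = iInp ∨ f = iUsed ∨ f = iFree

lemma step_lemma (f : Interaction) (hf : GoodI f) {b b' : Bool} (h : f b = some b') :
    (f = iInp ∧ b = true ∧ b' = false) ∨ (f ≠ iInp ∧ b' = b) := by
  have hNI : iNop ≠ iInp := by
    intro he; have := congrFun he false; simp [iNop, iInp] at this
  have hUI : iUsed ≠ iInp := by
    intro he; have := congrFun he true; simp [iUsed, iInp] at this
  have hFI : iFree ≠ iInp := by
    intro he; have := congrFun he false; simp [iFree, iInp] at this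
  rcases hf with rfl | rfl | rfl | rfl
  · exact Or.inr ⟨hNI, (Option.some.inj h).symm⟩
  · cases b
    · exact absurd h (by simp [iInp])
    · exact Or.inl ⟨rfl, rfl, by simpa [iInp] using h.symm⟩
  · cases b
    · exact absurd h (by simp [iUsed])
    · exact Or.inr ⟨hUI, by simpa [iUsed] using h.symm⟩
  · cases b
    · exact Or.inr ⟨hFI, by simpa [iFree] using h.symm⟩
    · exact absurd h (by simp [iFree])

lemma no_up (f : Interaction) (hf : GoodI f) : f false ≠ some true := by
  rcases hf with rfl | rfl | rfl | rfl <;> simp [iNop, iInp, iUsed, iFree]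

lemma defined_true (f : Interaction) (hf : f = iInp ∨ f = iUsed) {b b' : Bool}
    (h : f b = some b') : b = true := by
  rcases hf with rfl | rfl <;> cases b <;> simp_all [iInp, iUsed]

lemma from_false (f : Interaction) (hf : GoodI f) {b' : Bool}
    (h : f false = some b') : b' = false := by
  rcases hf with rfl | rfl | rfl | rfl <;> simp_all [iNop, iInp, iUsed, iFree]

lemma forward_model
    (hτ : τ = {iNop, iInp, iFree} ∨ τ = {iNop, iInp, iUsed, iFree})
    (hessp : ESSP (Aphi X) τ) : ∃ M : Set V, OneInThree X M := by
  obtain ⟨sup, sig, ⟨hsig, hreg⟩, hnone⟩ := hessp .q .k rfl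
  have good : ∀ e, GoodI (sig e) := by
    intro e
    have h := hsig e
    rcases hτ with rfl | rfl <;>
      simp only [Set.mem_insert_iff, Set.mem_singleton_iff] at h <;>
      unfold GoodI <;> tauto
  have hk1 : sig .k (sup .s0) = some (sup .s1) := hreg _ _ _ rfl
  have hh : sig .h (sup .s0) = some (sup .q) := hreg _ _ _ rfl
  have hmain : (sig .k = iInp ∨ sig .k = iUsed) ∧ sup .q = false := by
    rcases good .k with hk | hk | hk | hk
    · rw [hk] at hnone; exact absurd hnone (by simp [iNop])
    · refine ⟨Or.inl hk, ?_⟩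
      rw [hk] at hnone
      cases hq : sup .q
      · rfl
      · rw [hq] at hnone; exact absurd hnone (by simp [iInp])
    · refine ⟨Or.inr hk, ?_⟩
      rw [hk] at hnone
      cases hq : sup .q
      · rfl
      · rw [hq] at hnone; exact absurd hnone (by simp [iUsed])
    · exfalso
      rw [hk] at hnone hk1
      have hs0 : sup .s0 = false := by
        cases hs : sup .s0
        · rfl
        · rw [hs] at hk1; exact absurd hk1 (by simp [iFree])
      have hq : sup .q = true := by
        cases hq : sup .q
        · rw [hq] at hnone; exact absurd hnone (by simp [iFree])
        · rfl
      rw [hs0, hq] at hh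
      exact no_up _ (good .h) hh
  obtain ⟨hkiu, hq⟩ := hmain
  have hts0 : ∀ i, sup (.t i 0) = true := fun i =>
    defined_true _ hkiu (hreg (.t i 0) .k (.t i 8) rfl)
  have ht5 : ∀ i, sup (.t i 5) = false := by
    intro i
    have h := hreg .q (.hc i) (.t i 5) rfl
    rw [hq] at h
    exact from_false _ (good _) h
  refine ⟨{v | sig (.var v) = iInp}, fun i => ?_⟩
  have e0 : sig (.var (X i 0)) (sup (.t i 0)) = some (sup (.t i 1)) :=
    hreg _ _ _ (by show gadget X i 0 (X i 0) = _; simp [gadget])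
  have e1 : sig (.var (X i 1)) (sup (.t i 1)) = some (sup (.t i 2)) :=
    hreg _ _ _ (by show gadget X i 1 (X i 1) = _; simp [gadget])
  have e2 : sig (.var (X i 2)) (sup (.t i 2)) = some (sup (.t i 5)) :=
    hreg _ _ _ (by show gadget X i 2 (X i 2) = _; simp [gadget])
  rw [hts0 i] at e0
  rw [ht5 i] at e2
  have mem : ∀ y : Fin 3, (X i y ∈ {v | sig (.var v) = iInp}) =
      (sig (.var (X i y)) = iInp) := fun y => rfl
  rcases step_lemma _ (good _) e0 with ⟨hA0, -, h1⟩ | ⟨hA0, h1⟩ <;>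
    rcases step_lemma _ (good _) e1 with ⟨hA1, h1', h2⟩ | ⟨hA1, h2⟩ <;>
    rcases step_lemma _ (good _) e2 with ⟨hA2, h2', -⟩ | ⟨hA2, h2'⟩
  · exact absurd (h1.symm.trans h1') Bool.noConfusion
  · exact absurd (h1.symm.trans h1') Bool.noConfusion
  · -- LRL : b1 = false, b2 = b1, but e2 inp needs b2 = true
    exact absurd ((h2.trans h1).symm.trans h2') Bool.noConfusion
  · -- LRR : 0 is inp
    refine ⟨0, hA0, ?_⟩
    intro y hy
    fin_cases y
    · rfl
    · exact absurd hy hA1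
    · exact absurd hy hA2
  · -- RLL : e1 inp gives b2 = false, e2 inp gives b2 = true
    exact absurd (h2.symm.trans h2') Bool.noConfusion
  · -- RLR : 1 is inp
    refine ⟨1, hA1, ?_⟩
    intro y hy
    fin_cases y
    · exact absurd hy hA0
    · rfl
    · exact absurd hy hA2
  · refine ⟨2, hA2, ?_⟩
    intro y hy
    fin_cases y
    · exact absurd hy hA0
    · exact absurd hy hA1
    · rfl
  · -- all preserve : true = b1 = b2 = false
    exfalso
    rw [h1] at h2
    rw [h2] at h2'
    exact Bool.noConfusion h2'

end Forward

/-- A_φ is τ-feasible iff φ has a one-in-three model,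
for τ = {nop, inp, free} or τ = {nop, inp, used, free}. -/
theorem feasible_iff_model {m : ℕ} {V : Type} [DecidableEq V] [Fintype V]
    (X : Fin m → Fin 3 → V) (hcubic : CubicMonotone X)
    (τ : Set Interaction)
    (hτ : τ = {iNop, iInp, iFree} ∨ τ = {iNop, iInp, iUsed, iFree}) :
    Feasible (Aphi X) τ ↔ ∃ M : Set V, OneInThree X M := by
  constructor
  · rintro ⟨-, hessp⟩
    exact forward_model X hτ hessp
  · rintro ⟨M, hM⟩
    have hN : iNop ∈ τ := by rcases hτ with rfl | rfl <;> simp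
    have hI : iInp ∈ τ := by rcases hτ with rfl | rfl <;> simp
    have hF : iFree ∈ τ := by rcases hτ with rfl | rfl <;> simp
    exact ⟨ssp_backward X hcubic.1 hN hI hF M hM,
           essp_backward X hcubic.1 hN hI hF M hM⟩
end
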